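/- arXiv:1608.01528 — 3 statements merged into one kernel-verified Lean document; each statement's English description precedes it below -/
import Mathlib

section
/- Consider the tripartite scenario where parties A_1, A_2, A_3 have binary inputs x_1, x_2, x_3 ∈ {0,1}, party A_1 has a single fixed output, and parties A_2, A_3 have binary outputs a_2, a_3 ∈ {0,1}. For 0 < q_0, q_1 < 1 with q_0 ≠ q_1, the correlation P(a_2,a_3|x_1,x_2,x_3) = δ_{x_1,0}·(q_0·δ_{a_2,0}·δ_{a_3,x_2} + (1−q_0)·δ_{a_2,x_3}·δ_{a_3,0}) + δ_{x_1,1}·(q_1·δ_{a_2,0}·δ_{a_3,x_2} + (1−q_1)·δ_{a_2,x_3}·δ_{a_3,0}) is causal, but it cannot be written as a convex combination of causal correlations each of which is compatible with a fixed causal order (i.e., it is not a probabilistic mixture of fixed-order causal correlations). -/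
/-- A correlation for the parties in the finite set `S`, where party `i` has input set `X i`
and output set `A i`: a real number `P x a` for each assignment of inputs `x` and outputs `a`
for the parties in `S`. -/
def Corr {ι : Type} (X A : ι → Type) (S : Finset ι) : Type :=
  ((i : {j // j ∈ S}) → X i.1) → ((i : {j // j ∈ S}) → A i.1) → ℝ

/-- `p` is a probability distribution on the finite type `α`. -/
def IsProbDist {α : Type} [Fintype α] (p : α → ℝ) : Prop :=
  (∀ a, 0 ≤ p a) ∧ ∑ a, p a = 1

/-- Restriction of a tuple indexed by `S` to a subset `T ⊆ S`. -/
def restr {ι : Type} {X : ι → Type} {S T : Finset ι} (h : T ⊆ S)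
    (x : (i : {j // j ∈ S}) → X i.1) : (i : {j // j ∈ T}) → X i.1 :=
  fun i => x ⟨i.1, h i.2⟩

theorem erase_sub {ι : Type} [DecidableEq ι] (S : Finset ι) (k : ι) : S.erase k ⊆ S :=
  fun _ hi => Finset.mem_of_mem_erase hi

theorem sdiff_sub {ι : Type} [DecidableEq ι] (S K : Finset ι) : S \ K ⊆ S :=
  fun _ hi => (Finset.mem_sdiff.mp hi).1

/-- Combine a tuple on `K` and a tuple on `S \ K` into a tuple on `S`. -/
def glue {ι : Type} [DecidableEq ι] {X : ι → Type} {S K : Finset ι} (_ : K ⊆ S)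
    (u : (i : {j // j ∈ K}) → X i.1) (v : (i : {j // j ∈ S \ K}) → X i.1) :
    (i : {j // j ∈ S}) → X i.1 :=
  fun i => if h : i.1 ∈ K then u ⟨i.1, h⟩ else v ⟨i.1, Finset.mem_sdiff.mpr ⟨i.2, h⟩⟩

/-- Insert a value for party `k` into a tuple on `S.erase k`, giving a tuple on `S`. -/
def ins {ι : Type} [DecidableEq ι] {X : ι → Type} {S : Finset ι} {k : ι} (_ : k ∈ S)
    (xk : X k) (u : (i : {j // j ∈ S.erase k}) → X i.1) : (i : {j // j ∈ S}) → X i.1 :=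
  fun i => if h : i.1 = k then cast (congrArg X h.symm) xk
    else u ⟨i.1, Finset.mem_erase.mpr ⟨h, i.2⟩⟩

/-- Causal correlations, defined by induction on the number of parties: any single-party
probability distribution is causal; a correlation on a set `S` of at least two parties is
causal iff it is a convex combination, over choices of a party `k ∈ S` acting first, of
products of a single-party distribution for `k` with causal correlations for the remaining
parties `S.erase k` that may depend on the input and output of party `k`. -/
inductive IsCausal {ι : Type} [DecidableEq ι] (X A : ι → Type) [∀ i, Fintype (A i)] :
    (S : Finset ι) → Corr X A S → Prop
  | base (k : ι) (P : Corr X A {k}) (hP : ∀ x, IsProbDist (P x)) : IsCausal X A {k} P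
  | step (S : Finset ι) (hS : 2 ≤ S.card) (P : Corr X A S)
      (q : {j // j ∈ S} → ℝ)
      (Pfirst : (k : {j // j ∈ S}) → X k.1 → A k.1 → ℝ)
      (Prest : (k : {j // j ∈ S}) → X k.1 → A k.1 → Corr X A (S.erase k.1))
      (hq : ∀ k, 0 ≤ q k)
      (hq1 : ∑ k ∈ S.attach, q k = 1)
      (hPfirst : ∀ k xk, IsProbDist (Pfirst k xk))
      (hPrest : ∀ k xk ak, IsCausal X A (S.erase k.1) (Prest k xk ak))
      (hP : ∀ x a, P x a = ∑ k ∈ S.attach, q k * Pfirst k (x k) (a k) *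
            Prest k (x k) (a k) (restr (erase_sub S k.1) x) (restr (erase_sub S k.1) a)) :
      IsCausal X A S P

section helpers
set_option linter.unusedSectionVars false
variable {ι : Type} [DecidableEq ι] {X A : ι → Type} [∀ i, Fintype (A i)]

def singletonPiEquiv (A : ι → Type) (k : ι) :
    ((i : {j // j ∈ ({k} : Finset ι)}) → A i.1) ≃ A k where
  toFun a := a ⟨k, Finset.mem_singleton_self k⟩
  invFun b i := cast (congrArg A (Finset.mem_singleton.mp i.2).symm) b
  left_inv a := by
    funext i
    obtain ⟨v, hv⟩ := i
    have h := Finset.mem_singleton.mp hv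
    subst h
    rfl
  right_inv b := rfl

lemma isCausal_of_single (S : Finset ι) (k : ι) (hS : S = {k}) (hk : k ∈ S)
    (P : Corr X A S) (f : X k → A k → ℝ) (hf : ∀ x, IsProbDist (f x))
    (hP : ∀ x a, P x a = f (x ⟨k, hk⟩) (a ⟨k, hk⟩)) : IsCausal X A S P := by
  subst hS
  refine .base k P (fun x => ⟨fun a => (hP x a) ▸ (hf _).1 _, ?_⟩)
  calc ∑ a, P x a = ∑ a, f (x ⟨k, hk⟩) (singletonPiEquiv A k a) := by
        refine Finset.sum_congr rfl fun a _ => ?_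
        rw [hP]; rfl
    _ = ∑ b, f (x ⟨k, hk⟩) b := Equiv.sum_comp (singletonPiEquiv A k) _
    _ = 1 := (hf _).2

variable [∀ i, Nonempty (A i)]

noncomputable def prodCorr (X : ι → Type) (A : ι → Type) [∀ i, Fintype (A i)] (S : Finset ι) :
    Corr X A S :=
  fun _ _ => ∏ i ∈ S.attach, ((Fintype.card (A i.1) : ℝ))⁻¹

lemma card_ne (i : ι) : (Fintype.card (A i) : ℝ) ≠ 0 := by
  exact_mod_cast Fintype.card_ne_zero

lemma prodCorr_isCausal : ∀ (n : ℕ) (S : Finset ι), S.card = n → S.Nonempty →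
    IsCausal X A S (prodCorr X A S) := by
  intro n
  induction n using Nat.strong_induction_on with
  | _ n ih =>
    intro S hcard hne
    match n, hcard with
    | 0, hcard => exact absurd (Finset.card_eq_zero.mp hcard) (Finset.nonempty_iff_ne_empty.mp hne)
    | 1, hcard =>
      obtain ⟨k, hk⟩ := Finset.card_eq_one.mp hcard
      subst hk
      refine isCausal_of_single _ k rfl (Finset.mem_singleton_self k) _
        (fun _ a => (Fintype.card (A k) : ℝ)⁻¹) (fun x => ⟨fun a => by positivity, ?_⟩) ?_
      · rw [Finset.sum_const, nsmul_eq_mul, Finset.card_univ, mul_inv_cancel₀ (card_ne k)]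
      · intro x a
        show ∏ i ∈ Finset.attach _, ((Fintype.card (A i.1) : ℝ))⁻¹ = _
        rw [Finset.prod_attach _ (fun i => ((Fintype.card (A i) : ℝ))⁻¹), Finset.prod_singleton]
    | (m + 2), hcard =>
      have hcne : (S.card : ℝ) ≠ 0 := by rw [hcard]; positivity
      refine IsCausal.step S (by omega) _ (fun _ => (S.card : ℝ)⁻¹)
        (fun k _ => fun _ => (Fintype.card (A k.1) : ℝ)⁻¹)
        (fun k _ _ => prodCorr X A (S.erase k.1))
        (fun k => by positivity) ?_ (fun k xk => ⟨fun a => by positivity, ?_⟩) ?_ ?_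
      · rw [Finset.sum_const, nsmul_eq_mul, Finset.card_attach, mul_inv_cancel₀ hcne]
      · rw [Finset.sum_const, nsmul_eq_mul, Finset.card_univ, mul_inv_cancel₀ (card_ne _)]
      · intro k xk ak
        refine ih (m + 1) (by omega) _ (by rw [Finset.card_erase_of_mem k.2, hcard]; omega) ?_
        rw [← Finset.card_pos, Finset.card_erase_of_mem k.2, hcard]; omega
      · intro x a
        show ∏ i ∈ S.attach, ((Fintype.card (A i.1) : ℝ))⁻¹ = _
        have key : ∀ k : {j // j ∈ S},
            (prodCorr X A (S.erase k.1) (restr (erase_sub S k.1) x) (restr (erase_sub S k.1) a))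
            * (Fintype.card (A k.1) : ℝ)⁻¹ = ∏ i ∈ S.attach, ((Fintype.card (A i.1) : ℝ))⁻¹ := by
          intro k
          show (∏ i ∈ (S.erase k.1).attach, ((Fintype.card (A i.1) : ℝ))⁻¹) * _ = _
          rw [Finset.prod_attach _ (fun i => ((Fintype.card (A i) : ℝ))⁻¹),
            Finset.prod_attach S (fun i => ((Fintype.card (A i) : ℝ))⁻¹),
            Finset.prod_erase_mul S _ k.2]
        calc ∏ i ∈ S.attach, ((Fintype.card (A i.1) : ℝ))⁻¹
            = ∑ k ∈ S.attach, (S.card : ℝ)⁻¹ * (∏ i ∈ S.attach, ((Fintype.card (A i.1) : ℝ))⁻¹) := by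
              rw [Finset.sum_const, Finset.card_attach, nsmul_eq_mul, ← mul_assoc,
                mul_inv_cancel₀ hcne, one_mul]
          _ = _ := by
              refine Finset.sum_congr rfl fun k _ => ?_
              rw [← key k]; ring
end helpers

/-- The output sets for the tripartite scenario of Eq. (8) of the paper: party `A_1` has a
single fixed output (`Unit`), parties `A_2` and `A_3` have binary outputs. -/
def A9 : Fin 3 → Type
  | ⟨0, _⟩ => Unit
  | ⟨1, _⟩ => Bool
  | ⟨_ + 2, _⟩ => Bool

instance A9.instFintype : (i : Fin 3) → Fintype (A9 i)
  | ⟨0, _⟩ => inferInstanceAs (Fintype Unit)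
  | ⟨1, _⟩ => inferInstanceAs (Fintype Bool)
  | ⟨_ + 2, _⟩ => inferInstanceAs (Fintype Bool)

instance A9.instDecidableEq : (i : Fin 3) → DecidableEq (A9 i)
  | ⟨0, _⟩ => inferInstanceAs (DecidableEq Unit)
  | ⟨1, _⟩ => inferInstanceAs (DecidableEq Bool)
  | ⟨_ + 2, _⟩ => inferInstanceAs (DecidableEq Bool)

instance A9.instDecidableEqBool1 (a : A9 1) (b : Bool) : Decidable (a = b) :=
  A9.instDecidableEq 1 a b

instance A9.instDecidableEqBool2 (a : A9 2) (b : Bool) : Decidable (a = b) :=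
  A9.instDecidableEq 2 a b

instance A9.instNonempty : (i : Fin 3) → Nonempty (A9 i)
  | ⟨0, _⟩ => inferInstanceAs (Nonempty Unit)
  | ⟨1, _⟩ => inferInstanceAs (Nonempty Bool)
  | ⟨_ + 2, _⟩ => inferInstanceAs (Nonempty Bool)

abbrev X3 : Fin 3 → Type := fun _ => Bool

def dirac (b : Bool) : Bool → ℝ := fun c => if c = b then 1 else 0

lemma dirac_nonneg (b c : Bool) : 0 ≤ dirac b c := by
  unfold dirac; split <;> norm_num

lemma dirac_prob (b : Bool) : IsProbDist (dirac b) := by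
  refine ⟨dirac_nonneg b, ?_⟩
  rw [Fintype.sum_bool]; cases b <;> simp [dirac]

/-- first-party distributions -/
def Pf2 : (i : Fin 3) → Bool → A9 i → ℝ
  | ⟨0, _⟩ => fun _ _ => 1
  | ⟨1, _⟩ => fun _ => dirac false
  | ⟨_ + 2, _⟩ => fun _ => dirac false

lemma Pf2_prob : ∀ (i : Fin 3) (x : Bool), IsProbDist (Pf2 i x)
  | ⟨0, _⟩, x => ⟨fun _ => zero_le_one, by show ∑ _ : Unit, (1:ℝ) = 1; simp⟩
  | ⟨1, _⟩, x => dirac_prob false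
  | ⟨2, _⟩, x => dirac_prob false

noncomputable def Pr2 : (i : Fin 3) → Bool → A9 i → Corr X3 A9 ((Finset.univ.erase 0).erase i)
  | ⟨0, _⟩ => fun _ _ => prodCorr X3 A9 _
  | ⟨1, _⟩ => fun x _ => fun _ a =>
      dirac x (a ⟨2, (by decide : (2:Fin 3) ∈ (Finset.univ.erase 0).erase 1)⟩)
  | ⟨n + 2, h⟩ => fun x _ => fun _ a =>
      dirac x (a ⟨1, by have hn : n = 0 := by omega
                        subst hn
                        exact (by decide : (1:Fin 3) ∈ (Finset.univ.erase 0).erase 2)⟩)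

lemma Pr2_causal1 (x : Bool) (a : A9 1) :
    IsCausal X3 A9 ((Finset.univ.erase 0).erase 1) (Pr2 1 x a) :=
  isCausal_of_single _ 2 (by decide) (by decide) _
    (fun _ => dirac x : X3 2 → A9 2 → ℝ) (fun _ => dirac_prob x) (fun x' a' => rfl)

lemma Pr2_causal2 (x : Bool) (a : A9 2) :
    IsCausal X3 A9 ((Finset.univ.erase 0).erase 2) (Pr2 2 x a) :=
  isCausal_of_single _ 1 (by decide) (by decide) _
    (fun _ => dirac x : X3 1 → A9 1 → ℝ) (fun _ => dirac_prob x) (fun x' a' => rfl)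

lemma Pr2_causal : ∀ (i : Fin 3) (x : Bool) (a : A9 i),
    IsCausal X3 A9 ((Finset.univ.erase 0).erase i) (Pr2 i x a) := by
  intro i
  fin_cases i
  · exact fun x a => prodCorr_isCausal 2 _ (by decide) ⟨1, by decide⟩
  · exact Pr2_causal1
  · exact Pr2_causal2

lemma mem1e : (1:Fin 3) ∈ Finset.univ.erase 0 := by decide
lemma mem2e : (2:Fin 3) ∈ Finset.univ.erase 0 := by decide

def Qc (q0 q1 : ℝ) (b : Bool) : Corr X3 A9 (Finset.univ.erase 0) := fun x a =>
  (if b = false then q0 else q1) *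
      (if a ⟨1, mem1e⟩ = false ∧ a ⟨2, mem2e⟩ = x ⟨1, mem1e⟩ then 1 else 0)
  + (1 - if b = false then q0 else q1) *
      (if a ⟨1, mem1e⟩ = x ⟨2, mem2e⟩ ∧ a ⟨2, mem2e⟩ = false then 1 else 0)

lemma qc_main (r : ℝ) (a1 a2 x1 x2 : Bool) :
    r * (if a1 = false ∧ a2 = x1 then (1:ℝ) else 0)
      + (1 - r) * (if a1 = x2 ∧ a2 = false then 1 else 0)
    = r * dirac false a1 * dirac x1 a2 + (1 - r) * dirac false a2 * dirac x2 a1 := by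
  cases a1 <;> cases a2 <;> cases x1 <;> cases x2 <;> simp [dirac] <;> ring

lemma Qc_causal (q0 q1 : ℝ) (h00 : 0 ≤ q0) (h01 : q0 ≤ 1) (h10 : 0 ≤ q1) (h11 : q1 ≤ 1)
    (b : Bool) : IsCausal X3 A9 (Finset.univ.erase 0) (Qc q0 q1 b) := by
  set r := if b = false then q0 else q1 with hr
  have hr0 : 0 ≤ r := by rw [hr]; split <;> assumption
  have hr1 : r ≤ 1 := by rw [hr]; split <;> assumption
  refine IsCausal.step _ (by decide) _
    (fun j => if j.1 = 1 then r else 1 - r)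
    (fun j => Pf2 j.1)
    (fun j => Pr2 j.1)
    (fun j => by split <;> [exact hr0; linarith]) ?_
    (fun k xk => Pf2_prob k.1 xk)
    (fun k xk ak => Pr2_causal k.1 xk ak) ?_
  · rw [(by decide : (Finset.univ.erase (0:Fin 3)).attach
      = ({⟨1, mem1e⟩, ⟨2, mem2e⟩} : Finset {j // j ∈ Finset.univ.erase (0:Fin 3)})),
      Finset.sum_insert (by decide), Finset.sum_singleton, if_pos (by decide), if_neg (by decide)]
    ring
  · intro x a
    rw [(by decide : (Finset.univ.erase (0:Fin 3)).attach
      = ({⟨1, mem1e⟩, ⟨2, mem2e⟩} : Finset {j // j ∈ Finset.univ.erase (0:Fin 3)})),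
      Finset.sum_insert (by decide), Finset.sum_singleton]
    show Qc q0 q1 b x a = r * _ * _ + (1 - r) * _ * _
    exact qc_main r (a ⟨1, mem1e⟩) (a ⟨2, mem2e⟩) (x ⟨1, mem1e⟩) (x ⟨2, mem2e⟩)

noncomputable def POut (q0 q1 : ℝ) :
    (i : Fin 3) → Bool → A9 i → Corr X3 A9 (Finset.univ.erase i)
  | ⟨0, _⟩ => fun x _ => Qc q0 q1 x
  | ⟨1, _⟩ => fun _ _ => prodCorr X3 A9 _
  | ⟨_ + 2, _⟩ => fun _ _ => prodCorr X3 A9 _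

lemma POut_causal (q0 q1 : ℝ) (h00 : 0 ≤ q0) (h01 : q0 ≤ 1) (h10 : 0 ≤ q1) (h11 : q1 ≤ 1) :
    ∀ (i : Fin 3) (x : Bool) (a : A9 i),
      IsCausal X3 A9 (Finset.univ.erase i) (POut q0 q1 i x a) := by
  intro i
  fin_cases i
  · exact fun x a => Qc_causal q0 q1 h00 h01 h10 h11 x
  · exact fun x a => prodCorr_isCausal 2 _ (by decide) ⟨0, by decide⟩
  · exact fun x a => prodCorr_isCausal 2 _ (by decide) ⟨0, by decide⟩


/-- A correlation is compatible with the fixed causal order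
`A_{σ(1)} ≺ A_{σ(2)} ≺ … ≺ A_{σ(N)}` if it factorizes as a product of conditional
distributions, where the output of the `j`-th party in the order may depend only on the
inputs of the first `j` parties and the outputs of the first `j - 1` parties. -/
def CompatibleWithOrder {N : ℕ} (X A : Fin N → Type) [∀ i, Fintype (A i)]
    (σ : Equiv.Perm (Fin N)) (P : Corr X A Finset.univ) : Prop :=
  ∃ Pc : (j : Fin N) → ((i : Fin N) → i ≤ j → X (σ i)) → ((i : Fin N) → i < j → A (σ i)) →
      A (σ j) → ℝ,
    (∀ j xs as aj, 0 ≤ Pc j xs as aj) ∧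
    (∀ j xs as, ∑ aj, Pc j xs as aj = 1) ∧
    (∀ x a, P x a = ∏ j, Pc j (fun i _ => x ⟨σ i, Finset.mem_univ _⟩)
        (fun i _ => a ⟨σ i, Finset.mem_univ _⟩) (a ⟨σ j, Finset.mem_univ _⟩))

def pm (f g : Fin 3 → Fin 3) (h1 : ∀ i, g (f i) = i := by decide)
    (h2 : ∀ i, f (g i) = i := by decide) : Equiv.Perm (Fin 3) := ⟨f, g, h1, h2⟩
def p012 := pm ![0,1,2] ![0,1,2]
def p021 := pm ![0,2,1] ![0,2,1]
def p102 := pm ![1,0,2] ![1,0,2]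
def p120 := pm ![1,2,0] ![2,0,1]
def p201 := pm ![2,0,1] ![1,2,0]
def p210 := pm ![2,1,0] ![2,1,0]

theorem perm3_cases : ∀ σ : Equiv.Perm (Fin 3), σ = p012 ∨ σ = p021 ∨ σ = p102 ∨ σ = p120 ∨
    σ = p201 ∨ σ = p210 := by decide

def xv (b0 b1 b2 : Bool) : (i : {j // j ∈ (Finset.univ : Finset (Fin 3))}) → Bool :=
  fun i => ![b0, b1, b2] i.1

def af (c1 c2 : Bool) : (i : Fin 3) → A9 i
  | ⟨0, _⟩ => ()
  | ⟨1, _⟩ => c1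
  | ⟨_ + 2, _⟩ => c2

def afv (c1 c2 : Bool) : (i : {j // j ∈ (Finset.univ : Finset (Fin 3))}) → A9 i.1 :=
  fun i => af c1 c2 i.1

noncomputable def marg3 (P : Corr X3 A9 Finset.univ)
    (x : (i : {j // j ∈ (Finset.univ : Finset (Fin 3))}) → Bool) : ℝ :=
  P x (afv false true) + P x (afv true true)

noncomputable def marg2 (P : Corr X3 A9 Finset.univ)
    (x : (i : {j // j ∈ (Finset.univ : Finset (Fin 3))}) → Bool) : ℝ :=
  P x (afv true false) + P x (afv true true)



lemma slot0 (B Y Z : ℝ) (hB : 0 ≤ B) (hY0 : 0 ≤ Y) (hY1 : Y ≤ 1) (hZ0 : 0 ≤ Z) (hZ1 : Z ≤ 1) :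
    B * Y * Z ≤ B :=
  le_trans (mul_le_of_le_one_right (mul_nonneg hB hY0) hZ1) (mul_le_of_le_one_right hB hY1)

lemma slot1 (A B C : ℝ) (hA0 : 0 ≤ A) (hA1 : A ≤ 1) (hB : 0 ≤ B) (hC0 : 0 ≤ C) (hC1 : C ≤ 1) :
    A * B * C ≤ B :=
  calc A * B * C ≤ A * B := mul_le_of_le_one_right (mul_nonneg hA0 hB) hC1
    _ ≤ 1 * B := mul_le_mul_of_nonneg_right hA1 hB
    _ = B := one_mul B

lemma PcCongr3 {α γ : Type} {ξ β : Fin 3 → Type} (j : Fin 3)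
    (F : ((i : Fin 3) → i ≤ j → ξ i) → ((i : Fin 3) → i < j → β i) → γ → α)
    {u u' : (i : Fin 3) → i ≤ j → ξ i} {v v' : (i : Fin 3) → i < j → β i} {w w' : γ}
    (hu : ∀ i hi, u i hi = u' i hi) (hv : ∀ i hi, v i hi = v' i hi) (hw : w = w') :
    F u v w = F u' v' w' := by
  have h1 : u = u' := funext fun i => funext fun hi => hu i hi
  have h2 : v = v' := funext fun i => funext fun hi => hv i hi
  rw [h1, h2, hw]

lemma casep012 (P : Corr X3 A9 Finset.univ) (h : CompatibleWithOrder X3 A9 p012 P) :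
    (∀ x1 x2 x3 x3', marg2 P (xv x1 x2 x3) = marg2 P (xv x1 x2 x3')) ∧ (∀ x, marg3 P x ≤ 1) := by
  obtain ⟨Pc, hpos, hnorm, hprod⟩ := h
  have hle1 : ∀ j xs as aj, Pc j xs as aj ≤ 1 := fun j xs as aj =>
    (hnorm j xs as) ▸ Finset.single_le_sum (fun c _ => hpos j xs as c) (Finset.mem_univ aj)
  have hn2 : ∀ xs as, Pc 2 xs as false + Pc 2 xs as true = 1 := by
    intro xs as
    have h := hnorm 2 xs as
    rw [show (∑ aj : A9 (p012 2), Pc 2 xs as aj) = Pc 2 xs as true + Pc 2 xs as false from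
      Fintype.sum_bool _] at h
    linarith
  have hn1 : ∀ xs as, Pc 1 xs as false + Pc 1 xs as true = 1 := by
    intro xs as
    have h := hnorm 1 xs as
    rw [show (∑ aj : A9 (p012 1), Pc 1 xs as aj) = Pc 1 xs as true + Pc 1 xs as false from
      Fintype.sum_bool _] at h
    linarith
  constructor
  · intro x1 x2 x3 x3'
    have hF : ∀ xc c, P (xv x1 x2 xc) (afv true c) =
        Pc 0 (fun i _ => xv x1 x2 false ⟨p012 i, Finset.mem_univ _⟩)
            (fun i _ => afv true false ⟨p012 i, Finset.mem_univ _⟩)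
            (afv true false ⟨p012 0, Finset.mem_univ _⟩) *
          Pc 1 (fun i _ => xv x1 x2 false ⟨p012 i, Finset.mem_univ _⟩)
            (fun i _ => afv true false ⟨p012 i, Finset.mem_univ _⟩)
            (afv true false ⟨p012 1, Finset.mem_univ _⟩) *
          Pc 2 (fun i _ => xv x1 x2 xc ⟨p012 i, Finset.mem_univ _⟩)
            (fun i _ => afv true false ⟨p012 i, Finset.mem_univ _⟩) c := by
      intro xc c
      rw [hprod, Fin.prod_univ_three]
      exact congrArg₂ (· * ·) (congrArg₂ (· * ·)
        (PcCongr3 0 (Pc 0) (by intro i hi; fin_cases i <;> first | rfl | exact absurd hi (by decide)) (by intro i hi; fin_cases i <;> first | rfl | exact absurd hi (by decide)) rfl)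
        (PcCongr3 1 (Pc 1) (by intro i hi; fin_cases i <;> first | rfl | exact absurd hi (by decide)) (by intro i hi; fin_cases i <;> first | rfl | exact absurd hi (by decide)) rfl))
        (PcCongr3 2 (Pc 2) (by intro i hi; fin_cases i <;> first | rfl | exact absurd hi (by decide)) (by intro i hi; fin_cases i <;> first | rfl | exact absurd hi (by decide)) rfl)
    show P _ (afv true false) + P _ (afv true true) = P _ (afv true false) + P _ (afv true true)
    rw [hF x3 false, hF x3 true, hF x3' false, hF x3' true,
      ← mul_add, ← mul_add, hn2, hn2]
  · intro x
    have hG : ∀ c, P x (afv c true) =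
        Pc 0 (fun i _ => x ⟨p012 i, Finset.mem_univ _⟩)
            (fun i _ => afv c true ⟨p012 i, Finset.mem_univ _⟩)
            (afv c true ⟨p012 0, Finset.mem_univ _⟩) *
          Pc 1 (fun i _ => x ⟨p012 i, Finset.mem_univ _⟩)
            (fun i _ => afv false true ⟨p012 i, Finset.mem_univ _⟩) c *
          Pc 2 (fun i _ => x ⟨p012 i, Finset.mem_univ _⟩)
            (fun i _ => afv c true ⟨p012 i, Finset.mem_univ _⟩)
            (afv c true ⟨p012 2, Finset.mem_univ _⟩) := by
      intro c
      rw [hprod, Fin.prod_univ_three]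
      exact congrArg₂ (· * ·) (congrArg₂ (· * ·) rfl
        (PcCongr3 1 (Pc 1) (by intro i hi; fin_cases i <;> first | rfl | exact absurd hi (by decide)) (by intro i hi; fin_cases i <;> first | rfl | exact absurd hi (by decide)) rfl)) rfl
    show P x (afv false true) + P x (afv true true) ≤ 1
    rw [hG false, hG true]
    refine le_trans (add_le_add
      (slot1 _ _ _ (hpos _ _ _ _) (hle1 _ _ _ _) (hpos _ _ _ _) (hpos _ _ _ _) (hle1 _ _ _ _))
      (slot1 _ _ _ (hpos _ _ _ _) (hle1 _ _ _ _) (hpos _ _ _ _) (hpos _ _ _ _) (hle1 _ _ _ _)))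
      (le_of_eq (hn1 _ _))

lemma casep102 (P : Corr X3 A9 Finset.univ) (h : CompatibleWithOrder X3 A9 p102 P) :
    (∀ x1 x2 x3 x3', marg2 P (xv x1 x2 x3) = marg2 P (xv x1 x2 x3')) ∧ (∀ x, marg3 P x ≤ 1) := by
  obtain ⟨Pc, hpos, hnorm, hprod⟩ := h
  have hle1 : ∀ j xs as aj, Pc j xs as aj ≤ 1 := fun j xs as aj =>
    (hnorm j xs as) ▸ Finset.single_le_sum (fun c _ => hpos j xs as c) (Finset.mem_univ aj)
  have hn2 : ∀ xs as, Pc 2 xs as false + Pc 2 xs as true = 1 := by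
    intro xs as
    have h := hnorm 2 xs as
    rw [show (∑ aj : A9 (p102 2), Pc 2 xs as aj) = Pc 2 xs as true + Pc 2 xs as false from
      Fintype.sum_bool _] at h
    linarith
  have hn0 : ∀ xs as, Pc 0 xs as false + Pc 0 xs as true = 1 := by
    intro xs as
    have h := hnorm 0 xs as
    rw [show (∑ aj : A9 (p102 0), Pc 0 xs as aj) = Pc 0 xs as true + Pc 0 xs as false from
      Fintype.sum_bool _] at h
    linarith
  constructor
  · intro x1 x2 x3 x3'
    have hF : ∀ xc c, P (xv x1 x2 xc) (afv true c) =
        Pc 0 (fun i _ => xv x1 x2 false ⟨p102 i, Finset.mem_univ _⟩)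
            (fun i _ => afv true false ⟨p102 i, Finset.mem_univ _⟩)
            (afv true false ⟨p102 0, Finset.mem_univ _⟩) *
          Pc 1 (fun i _ => xv x1 x2 false ⟨p102 i, Finset.mem_univ _⟩)
            (fun i _ => afv true false ⟨p102 i, Finset.mem_univ _⟩)
            (afv true false ⟨p102 1, Finset.mem_univ _⟩) *
          Pc 2 (fun i _ => xv x1 x2 xc ⟨p102 i, Finset.mem_univ _⟩)
            (fun i _ => afv true false ⟨p102 i, Finset.mem_univ _⟩) c := by
      intro xc c
      rw [hprod, Fin.prod_univ_three]
      exact congrArg₂ (· * ·) (congrArg₂ (· * ·)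
        (PcCongr3 0 (Pc 0) (by intro i hi; fin_cases i <;> first | rfl | exact absurd hi (by decide)) (by intro i hi; fin_cases i <;> first | rfl | exact absurd hi (by decide)) rfl)
        (PcCongr3 1 (Pc 1) (by intro i hi; fin_cases i <;> first | rfl | exact absurd hi (by decide)) (by intro i hi; fin_cases i <;> first | rfl | exact absurd hi (by decide)) rfl))
        (PcCongr3 2 (Pc 2) (by intro i hi; fin_cases i <;> first | rfl | exact absurd hi (by decide)) (by intro i hi; fin_cases i <;> first | rfl | exact absurd hi (by decide)) rfl)
    show P _ (afv true false) + P _ (afv true true) = P _ (afv true false) + P _ (afv true true)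
    rw [hF x3 false, hF x3 true, hF x3' false, hF x3' true,
      ← mul_add, ← mul_add, hn2, hn2]
  · intro x
    have hG : ∀ c, P x (afv c true) =
        Pc 0 (fun i _ => x ⟨p102 i, Finset.mem_univ _⟩)
            (fun i _ => afv false true ⟨p102 i, Finset.mem_univ _⟩) c *
          Pc 1 (fun i _ => x ⟨p102 i, Finset.mem_univ _⟩)
            (fun i _ => afv c true ⟨p102 i, Finset.mem_univ _⟩)
            (afv c true ⟨p102 1, Finset.mem_univ _⟩) *
          Pc 2 (fun i _ => x ⟨p102 i, Finset.mem_univ _⟩)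
            (fun i _ => afv c true ⟨p102 i, Finset.mem_univ _⟩)
            (afv c true ⟨p102 2, Finset.mem_univ _⟩) := by
      intro c
      rw [hprod, Fin.prod_univ_three]
      exact congrArg₂ (· * ·) (congrArg₂ (· * ·)
        (PcCongr3 0 (Pc 0) (by intro i hi; fin_cases i <;> first | rfl | exact absurd hi (by decide)) (by intro i hi; fin_cases i <;> first | rfl | exact absurd hi (by decide)) rfl) rfl) rfl
    show P x (afv false true) + P x (afv true true) ≤ 1
    rw [hG false, hG true]
    refine le_trans (add_le_add
      (slot0 _ _ _ (hpos _ _ _ _) (hpos _ _ _ _) (hle1 _ _ _ _) (hpos _ _ _ _) (hle1 _ _ _ _))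
      (slot0 _ _ _ (hpos _ _ _ _) (hpos _ _ _ _) (hle1 _ _ _ _) (hpos _ _ _ _) (hle1 _ _ _ _)))
      (le_of_eq (hn0 _ _))

lemma casep120 (P : Corr X3 A9 Finset.univ) (h : CompatibleWithOrder X3 A9 p120 P) :
    (∀ x1 x2 x3 x3', marg2 P (xv x1 x2 x3) = marg2 P (xv x1 x2 x3')) ∧ (∀ x, marg3 P x ≤ 1) := by
  obtain ⟨Pc, hpos, hnorm, hprod⟩ := h
  have hle1 : ∀ j xs as aj, Pc j xs as aj ≤ 1 := fun j xs as aj =>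
    (hnorm j xs as) ▸ Finset.single_le_sum (fun c _ => hpos j xs as c) (Finset.mem_univ aj)
  have hn1 : ∀ xs as, Pc 1 xs as false + Pc 1 xs as true = 1 := by
    intro xs as
    have h := hnorm 1 xs as
    rw [show (∑ aj : A9 (p120 1), Pc 1 xs as aj) = Pc 1 xs as true + Pc 1 xs as false from
      Fintype.sum_bool _] at h
    linarith
  have hn0 : ∀ xs as, Pc 0 xs as false + Pc 0 xs as true = 1 := by
    intro xs as
    have h := hnorm 0 xs as
    rw [show (∑ aj : A9 (p120 0), Pc 0 xs as aj) = Pc 0 xs as true + Pc 0 xs as false from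
      Fintype.sum_bool _] at h
    linarith
  haveI : Unique (A9 (p120 2)) := inferInstanceAs (Unique Unit)
  have hunit : ∀ xs as aj, Pc 2 xs as aj = 1 := by
    intro xs as aj
    have h := hnorm 2 xs as
    rw [Fintype.sum_unique] at h
    rw [Subsingleton.elim aj default]
    exact h
  constructor
  · intro x1 x2 x3 x3'
    have hF : ∀ xc c, P (xv x1 x2 xc) (afv true c) =
        Pc 0 (fun i _ => xv x1 x2 false ⟨p120 i, Finset.mem_univ _⟩)
            (fun i _ => afv true false ⟨p120 i, Finset.mem_univ _⟩)
            (afv true false ⟨p120 0, Finset.mem_univ _⟩) *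
          Pc 1 (fun i _ => xv x1 x2 xc ⟨p120 i, Finset.mem_univ _⟩)
            (fun i _ => afv true false ⟨p120 i, Finset.mem_univ _⟩) c := by
      intro xc c
      rw [hprod, Fin.prod_univ_three, hunit, mul_one]
      exact congrArg₂ (· * ·)
        (PcCongr3 0 (Pc 0) (by intro i hi; fin_cases i <;> first | rfl | exact absurd hi (by decide)) (by intro i hi; fin_cases i <;> first | rfl | exact absurd hi (by decide)) rfl)
        (PcCongr3 1 (Pc 1) (by intro i hi; fin_cases i <;> first | rfl | exact absurd hi (by decide)) (by intro i hi; fin_cases i <;> first | rfl | exact absurd hi (by decide)) rfl)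
    show P _ (afv true false) + P _ (afv true true) = P _ (afv true false) + P _ (afv true true)
    rw [hF x3 false, hF x3 true, hF x3' false, hF x3' true,
      ← mul_add, ← mul_add, hn1, hn1]
  · intro x
    have hG : ∀ c, P x (afv c true) =
        Pc 0 (fun i _ => x ⟨p120 i, Finset.mem_univ _⟩)
            (fun i _ => afv false true ⟨p120 i, Finset.mem_univ _⟩) c *
          Pc 1 (fun i _ => x ⟨p120 i, Finset.mem_univ _⟩)
            (fun i _ => afv c true ⟨p120 i, Finset.mem_univ _⟩)
            (afv c true ⟨p120 1, Finset.mem_univ _⟩) *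
          Pc 2 (fun i _ => x ⟨p120 i, Finset.mem_univ _⟩)
            (fun i _ => afv c true ⟨p120 i, Finset.mem_univ _⟩)
            (afv c true ⟨p120 2, Finset.mem_univ _⟩) := by
      intro c
      rw [hprod, Fin.prod_univ_three]
      exact congrArg₂ (· * ·) (congrArg₂ (· * ·)
        (PcCongr3 0 (Pc 0) (by intro i hi; fin_cases i <;> first | rfl | exact absurd hi (by decide)) (by intro i hi; fin_cases i <;> first | rfl | exact absurd hi (by decide)) rfl) rfl) rfl
    show P x (afv false true) + P x (afv true true) ≤ 1
    rw [hG false, hG true]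
    refine le_trans (add_le_add
      (slot0 _ _ _ (hpos _ _ _ _) (hpos _ _ _ _) (hle1 _ _ _ _) (hpos _ _ _ _) (hle1 _ _ _ _))
      (slot0 _ _ _ (hpos _ _ _ _) (hpos _ _ _ _) (hle1 _ _ _ _) (hpos _ _ _ _) (hle1 _ _ _ _)))
      (le_of_eq (hn0 _ _))

lemma casep021 (P : Corr X3 A9 Finset.univ) (h : CompatibleWithOrder X3 A9 p021 P) :
    (∀ x1 x2 x2' x3, marg3 P (xv x1 x2 x3) = marg3 P (xv x1 x2' x3)) ∧ (∀ x, marg2 P x ≤ 1) := by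
  obtain ⟨Pc, hpos, hnorm, hprod⟩ := h
  have hle1 : ∀ j xs as aj, Pc j xs as aj ≤ 1 := fun j xs as aj =>
    (hnorm j xs as) ▸ Finset.single_le_sum (fun c _ => hpos j xs as c) (Finset.mem_univ aj)
  have hn2 : ∀ xs as, Pc 2 xs as false + Pc 2 xs as true = 1 := by
    intro xs as
    have h := hnorm 2 xs as
    rw [show (∑ aj : A9 (p021 2), Pc 2 xs as aj) = Pc 2 xs as true + Pc 2 xs as false from
      Fintype.sum_bool _] at h
    linarith
  have hn1 : ∀ xs as, Pc 1 xs as false + Pc 1 xs as true = 1 := by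
    intro xs as
    have h := hnorm 1 xs as
    rw [show (∑ aj : A9 (p021 1), Pc 1 xs as aj) = Pc 1 xs as true + Pc 1 xs as false from
      Fintype.sum_bool _] at h
    linarith
  constructor
  · intro x1 x2 x2' x3
    have hF : ∀ xc c, P (xv x1 xc x3) (afv c true) =
        Pc 0 (fun i _ => xv x1 false x3 ⟨p021 i, Finset.mem_univ _⟩)
            (fun i _ => afv false true ⟨p021 i, Finset.mem_univ _⟩)
            (afv false true ⟨p021 0, Finset.mem_univ _⟩) *
          Pc 1 (fun i _ => xv x1 false x3 ⟨p021 i, Finset.mem_univ _⟩)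
            (fun i _ => afv false true ⟨p021 i, Finset.mem_univ _⟩)
            (afv false true ⟨p021 1, Finset.mem_univ _⟩) *
          Pc 2 (fun i _ => xv x1 xc x3 ⟨p021 i, Finset.mem_univ _⟩)
            (fun i _ => afv false true ⟨p021 i, Finset.mem_univ _⟩) c := by
      intro xc c
      rw [hprod, Fin.prod_univ_three]
      exact congrArg₂ (· * ·) (congrArg₂ (· * ·)
        (PcCongr3 0 (Pc 0) (by intro i hi; fin_cases i <;> first | rfl | exact absurd hi (by decide)) (by intro i hi; fin_cases i <;> first | rfl | exact absurd hi (by decide)) rfl)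
        (PcCongr3 1 (Pc 1) (by intro i hi; fin_cases i <;> first | rfl | exact absurd hi (by decide)) (by intro i hi; fin_cases i <;> first | rfl | exact absurd hi (by decide)) rfl))
        (PcCongr3 2 (Pc 2) (by intro i hi; fin_cases i <;> first | rfl | exact absurd hi (by decide)) (by intro i hi; fin_cases i <;> first | rfl | exact absurd hi (by decide)) rfl)
    show P _ (afv false true) + P _ (afv true true) = P _ (afv false true) + P _ (afv true true)
    rw [hF x2 false, hF x2 true, hF x2' false, hF x2' true,
      ← mul_add, ← mul_add, hn2, hn2]
  · intro x
    have hG : ∀ c, P x (afv true c) =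
        Pc 0 (fun i _ => x ⟨p021 i, Finset.mem_univ _⟩)
            (fun i _ => afv true c ⟨p021 i, Finset.mem_univ _⟩)
            (afv true c ⟨p021 0, Finset.mem_univ _⟩) *
          Pc 1 (fun i _ => x ⟨p021 i, Finset.mem_univ _⟩)
            (fun i _ => afv true false ⟨p021 i, Finset.mem_univ _⟩) c *
          Pc 2 (fun i _ => x ⟨p021 i, Finset.mem_univ _⟩)
            (fun i _ => afv true c ⟨p021 i, Finset.mem_univ _⟩)
            (afv true c ⟨p021 2, Finset.mem_univ _⟩) := by
      intro c
      rw [hprod, Fin.prod_univ_three]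
      exact congrArg₂ (· * ·) (congrArg₂ (· * ·) rfl
        (PcCongr3 1 (Pc 1) (by intro i hi; fin_cases i <;> first | rfl | exact absurd hi (by decide)) (by intro i hi; fin_cases i <;> first | rfl | exact absurd hi (by decide)) rfl)) rfl
    show P x (afv true false) + P x (afv true true) ≤ 1
    rw [hG false, hG true]
    refine le_trans (add_le_add
      (slot1 _ _ _ (hpos _ _ _ _) (hle1 _ _ _ _) (hpos _ _ _ _) (hpos _ _ _ _) (hle1 _ _ _ _))
      (slot1 _ _ _ (hpos _ _ _ _) (hle1 _ _ _ _) (hpos _ _ _ _) (hpos _ _ _ _) (hle1 _ _ _ _)))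
      (le_of_eq (hn1 _ _))

lemma casep201 (P : Corr X3 A9 Finset.univ) (h : CompatibleWithOrder X3 A9 p201 P) :
    (∀ x1 x2 x2' x3, marg3 P (xv x1 x2 x3) = marg3 P (xv x1 x2' x3)) ∧ (∀ x, marg2 P x ≤ 1) := by
  obtain ⟨Pc, hpos, hnorm, hprod⟩ := h
  have hle1 : ∀ j xs as aj, Pc j xs as aj ≤ 1 := fun j xs as aj =>
    (hnorm j xs as) ▸ Finset.single_le_sum (fun c _ => hpos j xs as c) (Finset.mem_univ aj)
  have hn2 : ∀ xs as, Pc 2 xs as false + Pc 2 xs as true = 1 := by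
    intro xs as
    have h := hnorm 2 xs as
    rw [show (∑ aj : A9 (p201 2), Pc 2 xs as aj) = Pc 2 xs as true + Pc 2 xs as false from
      Fintype.sum_bool _] at h
    linarith
  have hn0 : ∀ xs as, Pc 0 xs as false + Pc 0 xs as true = 1 := by
    intro xs as
    have h := hnorm 0 xs as
    rw [show (∑ aj : A9 (p201 0), Pc 0 xs as aj) = Pc 0 xs as true + Pc 0 xs as false from
      Fintype.sum_bool _] at h
    linarith
  constructor
  · intro x1 x2 x2' x3
    have hF : ∀ xc c, P (xv x1 xc x3) (afv c true) =
        Pc 0 (fun i _ => xv x1 false x3 ⟨p201 i, Finset.mem_univ _⟩)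
            (fun i _ => afv false true ⟨p201 i, Finset.mem_univ _⟩)
            (afv false true ⟨p201 0, Finset.mem_univ _⟩) *
          Pc 1 (fun i _ => xv x1 false x3 ⟨p201 i, Finset.mem_univ _⟩)
            (fun i _ => afv false true ⟨p201 i, Finset.mem_univ _⟩)
            (afv false true ⟨p201 1, Finset.mem_univ _⟩) *
          Pc 2 (fun i _ => xv x1 xc x3 ⟨p201 i, Finset.mem_univ _⟩)
            (fun i _ => afv false true ⟨p201 i, Finset.mem_univ _⟩) c := by
      intro xc c
      rw [hprod, Fin.prod_univ_three]
      exact congrArg₂ (· * ·) (congrArg₂ (· * ·)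
        (PcCongr3 0 (Pc 0) (by intro i hi; fin_cases i <;> first | rfl | exact absurd hi (by decide)) (by intro i hi; fin_cases i <;> first | rfl | exact absurd hi (by decide)) rfl)
        (PcCongr3 1 (Pc 1) (by intro i hi; fin_cases i <;> first | rfl | exact absurd hi (by decide)) (by intro i hi; fin_cases i <;> first | rfl | exact absurd hi (by decide)) rfl))
        (PcCongr3 2 (Pc 2) (by intro i hi; fin_cases i <;> first | rfl | exact absurd hi (by decide)) (by intro i hi; fin_cases i <;> first | rfl | exact absurd hi (by decide)) rfl)
    show P _ (afv false true) + P _ (afv true true) = P _ (afv false true) + P _ (afv true true)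
    rw [hF x2 false, hF x2 true, hF x2' false, hF x2' true,
      ← mul_add, ← mul_add, hn2, hn2]
  · intro x
    have hG : ∀ c, P x (afv true c) =
        Pc 0 (fun i _ => x ⟨p201 i, Finset.mem_univ _⟩)
            (fun i _ => afv true false ⟨p201 i, Finset.mem_univ _⟩) c *
          Pc 1 (fun i _ => x ⟨p201 i, Finset.mem_univ _⟩)
            (fun i _ => afv true c ⟨p201 i, Finset.mem_univ _⟩)
            (afv true c ⟨p201 1, Finset.mem_univ _⟩) *
          Pc 2 (fun i _ => x ⟨p201 i, Finset.mem_univ _⟩)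
            (fun i _ => afv true c ⟨p201 i, Finset.mem_univ _⟩)
            (afv true c ⟨p201 2, Finset.mem_univ _⟩) := by
      intro c
      rw [hprod, Fin.prod_univ_three]
      exact congrArg₂ (· * ·) (congrArg₂ (· * ·)
        (PcCongr3 0 (Pc 0) (by intro i hi; fin_cases i <;> first | rfl | exact absurd hi (by decide)) (by intro i hi; fin_cases i <;> first | rfl | exact absurd hi (by decide)) rfl) rfl) rfl
    show P x (afv true false) + P x (afv true true) ≤ 1
    rw [hG false, hG true]
    refine le_trans (add_le_add
      (slot0 _ _ _ (hpos _ _ _ _) (hpos _ _ _ _) (hle1 _ _ _ _) (hpos _ _ _ _) (hle1 _ _ _ _))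
      (slot0 _ _ _ (hpos _ _ _ _) (hpos _ _ _ _) (hle1 _ _ _ _) (hpos _ _ _ _) (hle1 _ _ _ _)))
      (le_of_eq (hn0 _ _))

lemma casep210 (P : Corr X3 A9 Finset.univ) (h : CompatibleWithOrder X3 A9 p210 P) :
    (∀ x1 x2 x2' x3, marg3 P (xv x1 x2 x3) = marg3 P (xv x1 x2' x3)) ∧ (∀ x, marg2 P x ≤ 1) := by
  obtain ⟨Pc, hpos, hnorm, hprod⟩ := h
  have hle1 : ∀ j xs as aj, Pc j xs as aj ≤ 1 := fun j xs as aj =>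
    (hnorm j xs as) ▸ Finset.single_le_sum (fun c _ => hpos j xs as c) (Finset.mem_univ aj)
  have hn1 : ∀ xs as, Pc 1 xs as false + Pc 1 xs as true = 1 := by
    intro xs as
    have h := hnorm 1 xs as
    rw [show (∑ aj : A9 (p210 1), Pc 1 xs as aj) = Pc 1 xs as true + Pc 1 xs as false from
      Fintype.sum_bool _] at h
    linarith
  have hn0 : ∀ xs as, Pc 0 xs as false + Pc 0 xs as true = 1 := by
    intro xs as
    have h := hnorm 0 xs as
    rw [show (∑ aj : A9 (p210 0), Pc 0 xs as aj) = Pc 0 xs as true + Pc 0 xs as false from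
      Fintype.sum_bool _] at h
    linarith
  haveI : Unique (A9 (p210 2)) := inferInstanceAs (Unique Unit)
  have hunit : ∀ xs as aj, Pc 2 xs as aj = 1 := by
    intro xs as aj
    have h := hnorm 2 xs as
    rw [Fintype.sum_unique] at h
    rw [Subsingleton.elim aj default]
    exact h
  constructor
  · intro x1 x2 x2' x3
    have hF : ∀ xc c, P (xv x1 xc x3) (afv c true) =
        Pc 0 (fun i _ => xv x1 false x3 ⟨p210 i, Finset.mem_univ _⟩)
            (fun i _ => afv false true ⟨p210 i, Finset.mem_univ _⟩)
            (afv false true ⟨p210 0, Finset.mem_univ _⟩) *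
          Pc 1 (fun i _ => xv x1 xc x3 ⟨p210 i, Finset.mem_univ _⟩)
            (fun i _ => afv false true ⟨p210 i, Finset.mem_univ _⟩) c := by
      intro xc c
      rw [hprod, Fin.prod_univ_three, hunit, mul_one]
      exact congrArg₂ (· * ·)
        (PcCongr3 0 (Pc 0) (by intro i hi; fin_cases i <;> first | rfl | exact absurd hi (by decide)) (by intro i hi; fin_cases i <;> first | rfl | exact absurd hi (by decide)) rfl)
        (PcCongr3 1 (Pc 1) (by intro i hi; fin_cases i <;> first | rfl | exact absurd hi (by decide)) (by intro i hi; fin_cases i <;> first | rfl | exact absurd hi (by decide)) rfl)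
    show P _ (afv false true) + P _ (afv true true) = P _ (afv false true) + P _ (afv true true)
    rw [hF x2 false, hF x2 true, hF x2' false, hF x2' true,
      ← mul_add, ← mul_add, hn1, hn1]
  · intro x
    have hG : ∀ c, P x (afv true c) =
        Pc 0 (fun i _ => x ⟨p210 i, Finset.mem_univ _⟩)
            (fun i _ => afv true false ⟨p210 i, Finset.mem_univ _⟩) c *
          Pc 1 (fun i _ => x ⟨p210 i, Finset.mem_univ _⟩)
            (fun i _ => afv true c ⟨p210 i, Finset.mem_univ _⟩)
            (afv true c ⟨p210 1, Finset.mem_univ _⟩) *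
          Pc 2 (fun i _ => x ⟨p210 i, Finset.mem_univ _⟩)
            (fun i _ => afv true c ⟨p210 i, Finset.mem_univ _⟩)
            (afv true c ⟨p210 2, Finset.mem_univ _⟩) := by
      intro c
      rw [hprod, Fin.prod_univ_three]
      exact congrArg₂ (· * ·) (congrArg₂ (· * ·)
        (PcCongr3 0 (Pc 0) (by intro i hi; fin_cases i <;> first | rfl | exact absurd hi (by decide)) (by intro i hi; fin_cases i <;> first | rfl | exact absurd hi (by decide)) rfl) rfl) rfl
    show P x (afv true false) + P x (afv true true) ≤ 1
    rw [hG false, hG true]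
    refine le_trans (add_le_add
      (slot0 _ _ _ (hpos _ _ _ _) (hpos _ _ _ _) (hle1 _ _ _ _) (hpos _ _ _ _) (hle1 _ _ _ _))
      (slot0 _ _ _ (hpos _ _ _ _) (hpos _ _ _ _) (hle1 _ _ _ _) (hpos _ _ _ _) (hle1 _ _ _ _)))
      (le_of_eq (hn0 _ _))


lemma compat_nonneg {σ : Equiv.Perm (Fin 3)} {P : Corr X3 A9 Finset.univ}
    (h : CompatibleWithOrder X3 A9 σ P) : ∀ x a, 0 ≤ P x a := by
  obtain ⟨Pc, hpos, _, hprod⟩ := h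
  intro x a
  rw [hprod]
  exact Finset.prod_nonneg fun j _ => hpos _ _ _ _

/-- The correlation of Eq. (8): `P(a_2, a_3 | x_1, x_2, x_3)
= δ_{x_1,0} (q_0 δ_{a_2,0} δ_{a_3,x_2} + (1 - q_0) δ_{a_2,x_3} δ_{a_3,0})
+ δ_{x_1,1} (q_1 δ_{a_2,0} δ_{a_3,x_2} + (1 - q_1) δ_{a_2,x_3} δ_{a_3,0})`,
encoding `0` as `false` and `1` as `true` (party 1 has no output). -/
def P9 (q0 q1 : ℝ) : Corr (fun _ : Fin 3 => Bool) A9 Finset.univ := fun x a =>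
  if x ⟨0, Finset.mem_univ 0⟩ = false then
    q0 * (if a ⟨1, Finset.mem_univ 1⟩ = false ∧
            a ⟨2, Finset.mem_univ 2⟩ = x ⟨1, Finset.mem_univ 1⟩ then 1 else 0)
      + (1 - q0) * (if a ⟨1, Finset.mem_univ 1⟩ = x ⟨2, Finset.mem_univ 2⟩ ∧
            a ⟨2, Finset.mem_univ 2⟩ = false then 1 else 0)
  else
    q1 * (if a ⟨1, Finset.mem_univ 1⟩ = false ∧
            a ⟨2, Finset.mem_univ 2⟩ = x ⟨1, Finset.mem_univ 1⟩ then 1 else 0)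
      + (1 - q1) * (if a ⟨1, Finset.mem_univ 1⟩ = x ⟨2, Finset.mem_univ 2⟩ ∧
            a ⟨2, Finset.mem_univ 2⟩ = false then 1 else 0)

lemma P9_causal (q0 q1 : ℝ) (h00 : 0 ≤ q0) (h01 : q0 ≤ 1) (h10 : 0 ≤ q1) (h11 : q1 ≤ 1) :
    IsCausal X3 A9 Finset.univ (P9 q0 q1) := by
  refine IsCausal.step _ (by decide) _
    (fun j => if j.1 = 0 then 1 else 0)
    (fun j => Pf2 j.1)
    (fun j => POut q0 q1 j.1)
    (fun j => by split <;> norm_num) ?_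
    (fun k xk => Pf2_prob k.1 xk)
    (fun k xk ak => POut_causal q0 q1 h00 h01 h10 h11 k.1 xk ak) ?_
  · rw [(by decide : (Finset.univ : Finset (Fin 3)).attach
      = ({⟨0, Finset.mem_univ 0⟩, ⟨1, Finset.mem_univ 1⟩, ⟨2, Finset.mem_univ 2⟩} :
          Finset {j // j ∈ (Finset.univ : Finset (Fin 3))})),
      Finset.sum_insert (by decide), Finset.sum_insert (by decide), Finset.sum_singleton,
      if_pos (by decide), if_neg (by decide), if_neg (by decide)]
    ring
  · intro x a
    rw [(by decide : (Finset.univ : Finset (Fin 3)).attach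
      = ({⟨0, Finset.mem_univ 0⟩, ⟨1, Finset.mem_univ 1⟩, ⟨2, Finset.mem_univ 2⟩} :
          Finset {j // j ∈ (Finset.univ : Finset (Fin 3))})),
      Finset.sum_insert (by decide), Finset.sum_insert (by decide), Finset.sum_singleton]
    dsimp only
    rw [if_pos (by decide : ((⟨0, Finset.mem_univ 0⟩ : {j // j ∈ (Finset.univ : Finset (Fin 3))}) : Fin 3) = 0),
      if_neg (by decide : ¬((⟨1, Finset.mem_univ 1⟩ : {j // j ∈ (Finset.univ : Finset (Fin 3))}) : Fin 3) = 0),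
      if_neg (by decide : ¬((⟨2, Finset.mem_univ 2⟩ : {j // j ∈ (Finset.univ : Finset (Fin 3))}) : Fin 3) = 0)]
    rw [zero_mul, zero_mul, zero_mul, zero_mul, add_zero, add_zero, one_mul]
    show P9 q0 q1 x a = Pf2 0 _ _ * Qc q0 q1 (x ⟨0, Finset.mem_univ 0⟩) _ _
    rw [show Pf2 0 (x ⟨0, Finset.mem_univ 0⟩) (a ⟨0, Finset.mem_univ 0⟩) = 1 from rfl, one_mul]
    rcases hb : x ⟨0, Finset.mem_univ 0⟩ with _ | _
    · show P9 q0 q1 x a = q0 * _ + (1 - q0) * _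
      rw [P9, if_pos hb]
      rfl
    · show P9 q0 q1 x a = q1 * _ + (1 - q1) * _
      rw [P9, if_neg (by rw [hb]; exact Bool.noConfusion)]
      rfl

section evals
variable (q0 q1 : ℝ)

lemma P9_marg3_hi (x1 x3 : Bool) :
    marg3 (P9 q0 q1) (xv x1 true x3) = if x1 = false then q0 else q1 := by
  show P9 q0 q1 _ (afv false true) + P9 q0 q1 _ (afv true true) = _
  simp only [P9]
  rw [show (xv x1 true x3 ⟨0, Finset.mem_univ 0⟩ : Bool) = x1 from rfl,
    show (xv x1 true x3 ⟨1, Finset.mem_univ 1⟩ : Bool) = true from rfl,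
    show (xv x1 true x3 ⟨2, Finset.mem_univ 2⟩ : Bool) = x3 from rfl,
    show (afv false true ⟨1, Finset.mem_univ 1⟩ : Bool) = false from rfl,
    show (afv false true ⟨2, Finset.mem_univ 2⟩ : Bool) = true from rfl,
    show (afv true true ⟨1, Finset.mem_univ 1⟩ : Bool) = true from rfl,
    show (afv true true ⟨2, Finset.mem_univ 2⟩ : Bool) = true from rfl]
  cases x1 <;> cases x3 <;> simp <;> exact fun h => absurd rfl (h rfl)

lemma P9_marg3_lo (x1 x3 : Bool) : marg3 (P9 q0 q1) (xv x1 false x3) = 0 := by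
  show P9 q0 q1 _ (afv false true) + P9 q0 q1 _ (afv true true) = _
  simp only [P9]
  rw [show (xv x1 false x3 ⟨0, Finset.mem_univ 0⟩ : Bool) = x1 from rfl,
    show (xv x1 false x3 ⟨1, Finset.mem_univ 1⟩ : Bool) = false from rfl,
    show (xv x1 false x3 ⟨2, Finset.mem_univ 2⟩ : Bool) = x3 from rfl,
    show (afv false true ⟨1, Finset.mem_univ 1⟩ : Bool) = false from rfl,
    show (afv false true ⟨2, Finset.mem_univ 2⟩ : Bool) = true from rfl,
    show (afv true true ⟨1, Finset.mem_univ 1⟩ : Bool) = true from rfl,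
    show (afv true true ⟨2, Finset.mem_univ 2⟩ : Bool) = true from rfl]
  cases x1 <;> cases x3 <;> simp

lemma P9_marg2_hi (x1 x2 : Bool) :
    marg2 (P9 q0 q1) (xv x1 x2 true) = 1 - (if x1 = false then q0 else q1) := by
  show P9 q0 q1 _ (afv true false) + P9 q0 q1 _ (afv true true) = _
  simp only [P9]
  rw [show (xv x1 x2 true ⟨0, Finset.mem_univ 0⟩ : Bool) = x1 from rfl,
    show (xv x1 x2 true ⟨1, Finset.mem_univ 1⟩ : Bool) = x2 from rfl,
    show (xv x1 x2 true ⟨2, Finset.mem_univ 2⟩ : Bool) = true from rfl,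
    show (afv true false ⟨1, Finset.mem_univ 1⟩ : Bool) = true from rfl,
    show (afv true false ⟨2, Finset.mem_univ 2⟩ : Bool) = false from rfl,
    show (afv true true ⟨1, Finset.mem_univ 1⟩ : Bool) = true from rfl,
    show (afv true true ⟨2, Finset.mem_univ 2⟩ : Bool) = true from rfl]
  cases x1 <;> cases x2 <;> simp <;> exact fun h => absurd rfl (h rfl)

lemma P9_marg2_lo (x1 x2 : Bool) : marg2 (P9 q0 q1) (xv x1 x2 false) = 0 := by
  show P9 q0 q1 _ (afv true false) + P9 q0 q1 _ (afv true true) = _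
  simp only [P9]
  rw [show (xv x1 x2 false ⟨0, Finset.mem_univ 0⟩ : Bool) = x1 from rfl,
    show (xv x1 x2 false ⟨1, Finset.mem_univ 1⟩ : Bool) = x2 from rfl,
    show (xv x1 x2 false ⟨2, Finset.mem_univ 2⟩ : Bool) = false from rfl,
    show (afv true false ⟨1, Finset.mem_univ 1⟩ : Bool) = true from rfl,
    show (afv true false ⟨2, Finset.mem_univ 2⟩ : Bool) = false from rfl,
    show (afv true true ⟨1, Finset.mem_univ 1⟩ : Bool) = true from rfl,
    show (afv true true ⟨2, Finset.mem_univ 2⟩ : Bool) = true from rfl]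
  cases x1 <;> cases x2 <;> simp
end evals

theorem not_mixture (q0 q1 : ℝ) (h00 : 0 < q0) (h01 : q0 < 1) (h10 : 0 < q1) (h11 : q1 < 1)
    (hne : q0 ≠ q1) :
    ¬ ∃ (M : ℕ) (w : Fin M → ℝ) (Ps : Fin M → Corr (fun _ : Fin 3 => Bool) A9 Finset.univ)
        (σs : Fin M → Equiv.Perm (Fin 3)),
        (∀ m, 0 ≤ w m) ∧ (∑ m, w m = 1) ∧
        (∀ m, CompatibleWithOrder (fun _ : Fin 3 => Bool) A9 (σs m) (Ps m)) ∧
        (∀ x a, P9 q0 q1 x a = ∑ m, w m * Ps m x a) := by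
  rintro ⟨M, w, Ps, σs, hw, hw1, hcomp, hmix⟩
  set cls : Fin M → Prop := fun m => (σs m).symm 1 < (σs m).symm 2 with hcls_def
  have hkey : ∀ m,
      (cls m → ((∀ x1 x2 x3 x3', marg2 (Ps m) (xv x1 x2 x3) = marg2 (Ps m) (xv x1 x2 x3')) ∧
        (∀ x, marg3 (Ps m) x ≤ 1))) ∧
      (¬ cls m → ((∀ x1 x2 x2' x3, marg3 (Ps m) (xv x1 x2 x3) = marg3 (Ps m) (xv x1 x2' x3)) ∧
        (∀ x, marg2 (Ps m) x ≤ 1))) := by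
    intro m
    have hc := hcomp m
    rcases perm3_cases (σs m) with hσ | hσ | hσ | hσ | hσ | hσ <;> rw [hσ] at hc
    · exact ⟨fun _ => casep012 _ hc,
        fun hn => absurd (show cls m by show (Equiv.symm (σs m)) 1 < (Equiv.symm (σs m)) 2; rw [hσ]; decide) hn⟩
    · refine ⟨fun hcl => ?_, fun _ => casep021 _ hc⟩
      have hcl' : (Equiv.symm (σs m)) 1 < (Equiv.symm (σs m)) 2 := hcl
      rw [hσ] at hcl'
      exact absurd hcl' (by decide)
    · exact ⟨fun _ => casep102 _ hc,
        fun hn => absurd (show cls m by show (Equiv.symm (σs m)) 1 < (Equiv.symm (σs m)) 2; rw [hσ]; decide) hn⟩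
    · exact ⟨fun _ => casep120 _ hc,
        fun hn => absurd (show cls m by show (Equiv.symm (σs m)) 1 < (Equiv.symm (σs m)) 2; rw [hσ]; decide) hn⟩
    · refine ⟨fun hcl => ?_, fun _ => casep201 _ hc⟩
      have hcl' : (Equiv.symm (σs m)) 1 < (Equiv.symm (σs m)) 2 := hcl
      rw [hσ] at hcl'
      exact absurd hcl' (by decide)
    · refine ⟨fun hcl => ?_, fun _ => casep210 _ hc⟩
      have hcl' : (Equiv.symm (σs m)) 1 < (Equiv.symm (σs m)) 2 := hcl
      rw [hσ] at hcl'
      exact absurd hcl' (by decide)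
  have hmix3 : ∀ x, marg3 (P9 q0 q1) x = ∑ m, w m * marg3 (Ps m) x := by
    intro x
    simp only [marg3]
    rw [hmix, hmix, ← Finset.sum_add_distrib]
    exact Finset.sum_congr rfl fun m _ => by ring
  have hmix2 : ∀ x, marg2 (P9 q0 q1) x = ∑ m, w m * marg2 (Ps m) x := by
    intro x
    simp only [marg2]
    rw [hmix, hmix, ← Finset.sum_add_distrib]
    exact Finset.sum_congr rfl fun m _ => by ring
  have hm3nn : ∀ m x, 0 ≤ marg3 (Ps m) x := fun m x =>
    add_nonneg (compat_nonneg (hcomp m) _ _) (compat_nonneg (hcomp m) _ _)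
  have hm2nn : ∀ m x, 0 ≤ marg2 (Ps m) x := fun m x =>
    add_nonneg (compat_nonneg (hcomp m) _ _) (compat_nonneg (hcomp m) _ _)
  have hz3 : ∀ x1 x3 m, w m * marg3 (Ps m) (xv x1 false x3) = 0 := by
    intro x1 x3 m
    have h0 : ∑ m, w m * marg3 (Ps m) (xv x1 false x3) = 0 := by
      rw [← hmix3, P9_marg3_lo]
    exact (Finset.sum_eq_zero_iff_of_nonneg
      (fun m _ => mul_nonneg (hw m) (hm3nn m _))).mp h0 m (Finset.mem_univ m)
  have hz2 : ∀ x1 x2 m, w m * marg2 (Ps m) (xv x1 x2 false) = 0 := by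
    intro x1 x2 m
    have h0 : ∑ m, w m * marg2 (Ps m) (xv x1 x2 false) = 0 := by
      rw [← hmix2, P9_marg2_lo]
    exact (Finset.sum_eq_zero_iff_of_nonneg
      (fun m _ => mul_nonneg (hw m) (hm2nn m _))).mp h0 m (Finset.mem_univ m)
  classical
  have hsplit := Finset.sum_filter_add_sum_filter_not Finset.univ cls w
  have key : ∀ x1 : Bool, (if x1 = false then q0 else q1) =
      ∑ m ∈ Finset.univ.filter cls, w m := by
    intro x1
    have e1 : (if x1 = false then q0 else q1) = ∑ m, w m * marg3 (Ps m) (xv x1 true false) := by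
      rw [← hmix3, P9_marg3_hi]
    have esplit := Finset.sum_filter_add_sum_filter_not Finset.univ cls
      (fun m => w m * marg3 (Ps m) (xv x1 true false))
    have e0 : ∑ m ∈ Finset.univ.filter (fun m => ¬ cls m),
        w m * marg3 (Ps m) (xv x1 true false) = 0 := by
      refine Finset.sum_eq_zero fun m hm => ?_
      have hn : ¬ cls m := (Finset.mem_filter.mp hm).2
      rw [((hkey m).2 hn).1 x1 true false false]
      exact hz3 x1 false m
    have e3 : ∑ m ∈ Finset.univ.filter cls, w m * marg3 (Ps m) (xv x1 true false) ≤
        ∑ m ∈ Finset.univ.filter cls, w m := by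
      refine Finset.sum_le_sum fun m hm => ?_
      have hcl : cls m := (Finset.mem_filter.mp hm).2
      calc w m * marg3 (Ps m) (xv x1 true false) ≤ w m * 1 :=
            mul_le_mul_of_nonneg_left (((hkey m).1 hcl).2 _) (hw m)
        _ = w m := mul_one _
    have hup : (if x1 = false then q0 else q1) ≤ ∑ m ∈ Finset.univ.filter cls, w m := by
      rw [e1, ← esplit, e0, add_zero]; exact e3
    -- lower bound via marg2
    have f1 : 1 - (if x1 = false then q0 else q1) =
        ∑ m, w m * marg2 (Ps m) (xv x1 false true) := by
      rw [← hmix2, P9_marg2_hi]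
    have fsplit := Finset.sum_filter_add_sum_filter_not Finset.univ cls
      (fun m => w m * marg2 (Ps m) (xv x1 false true))
    have f0 : ∑ m ∈ Finset.univ.filter cls, w m * marg2 (Ps m) (xv x1 false true) = 0 := by
      refine Finset.sum_eq_zero fun m hm => ?_
      have hcl : cls m := (Finset.mem_filter.mp hm).2
      rw [((hkey m).1 hcl).1 x1 false true false]
      exact hz2 x1 false m
    have f3 : ∑ m ∈ Finset.univ.filter (fun m => ¬ cls m),
        w m * marg2 (Ps m) (xv x1 false true) ≤
        ∑ m ∈ Finset.univ.filter (fun m => ¬ cls m), w m := by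
      refine Finset.sum_le_sum fun m hm => ?_
      have hn : ¬ cls m := (Finset.mem_filter.mp hm).2
      calc w m * marg2 (Ps m) (xv x1 false true) ≤ w m * 1 :=
            mul_le_mul_of_nonneg_left (((hkey m).2 hn).2 _) (hw m)
        _ = w m := mul_one _
    have hlo : 1 - (if x1 = false then q0 else q1) ≤
        ∑ m ∈ Finset.univ.filter (fun m => ¬ cls m), w m := by
      rw [f1, ← fsplit, f0, zero_add]; exact f3
    rw [hw1] at hsplit
    linarith
  have k0 := key false
  have k1 := key true
  simp only [if_pos rfl] at k0
  rw [if_neg (by exact Bool.noConfusion)] at k1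
  exact hne (k0.trans k1.symm)


/-- for `0 < q_0, q_1 < 1` with `q_0 ≠ q_1`, the correlation of Eq. (8) is
causal, but it is not a probabilistic mixture of fixed-order causal correlations. -/
theorem probabilistic_dynamical_example_causal_but_not_mixture_of_fixed_orders
    (q0 q1 : ℝ) (h00 : 0 < q0) (h01 : q0 < 1) (h10 : 0 < q1) (h11 : q1 < 1) (hne : q0 ≠ q1) :
    IsCausal (fun _ : Fin 3 => Bool) A9 Finset.univ (P9 q0 q1) ∧
    ¬ ∃ (M : ℕ) (w : Fin M → ℝ) (Ps : Fin M → Corr (fun _ : Fin 3 => Bool) A9 Finset.univ)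
        (σs : Fin M → Equiv.Perm (Fin 3)),
        (∀ m, 0 ≤ w m) ∧ (∑ m, w m = 1) ∧
        (∀ m, CompatibleWithOrder (fun _ : Fin 3 => Bool) A9 (σs m) (Ps m)) ∧
        (∀ x a, P9 q0 q1 x a = ∑ m, w m * Ps m x a) := by
  exact ⟨P9_causal q0 q1 h00.le h01.le h10.le h11.le, not_mixture q0 q1 h00 h01 h10 h11 hne⟩
end

section
/- Let P be a deterministic causal N-partite correlation, i.e., P(a|x) = δ_{a,α(x)} for some function α from input lists to output lists, and suppose P is causal. Then for each input list x there exist N nested subsets K_1 ⊂ K_2 ⊂ … ⊂ K_N = {1,…,N} with |K_j| = j for each j, such that for every j = 1,…,N, the marginal distribution of the outputs of the parties in K_j, Σ_{a_{N∖K_j}} P(a|x'), takes the same value for every input list x' that agrees with x on the inputs of the parties in K_j (i.e., the marginal for the parties in K_j depends only on x_{K_j}). -/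
section Helpers

variable {ι : Type} [DecidableEq ι]

theorem prob_le_one {α : Type} [Fintype α] {p : α → ℝ} (hp : IsProbDist p) (a : α) :
    p a ≤ 1 := by
  have := Finset.single_le_sum (f := p) (fun i _ => hp.1 i) (Finset.mem_univ a)
  rwa [hp.2] at this

theorem prob_unique_one {α : Type} [Fintype α] [DecidableEq α] {p : α → ℝ} (hp : IsProbDist p) {a b : α}
    (ha : p a = 1) (hb : p b = 1) : a = b := by
  by_contra hne
  have hsub : ({a, b} : Finset α) ⊆ Finset.univ := Finset.subset_univ _
  have := Finset.sum_le_sum_of_subset_of_nonneg hsub (fun i _ _ => hp.1 i)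
  rw [Finset.sum_pair hne, ha, hb, hp.2] at this
  linarith

theorem prob_one_delta {α : Type} [Fintype α] [DecidableEq α] {p : α → ℝ} (hp : IsProbDist p)
    {b : α} (hb : p b = 1) (a : α) : p a = if a = b then 1 else 0 := by
  split
  · next h => rw [h, hb]
  · next h =>
    have hsub : ({a, b} : Finset α) ⊆ Finset.univ := Finset.subset_univ _
    have h2 := Finset.sum_le_sum_of_subset_of_nonneg hsub (fun i _ _ => hp.1 i)
    rw [Finset.sum_pair h, hb, hp.2] at h2
    have := hp.1 a
    linarith

theorem ins_apply_self {X : ι → Type} {S : Finset ι} {k : ι} (hk : k ∈ S)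
    (xk : X k) (u : (i : {j // j ∈ S.erase k}) → X i.1) :
    ins hk xk u ⟨k, hk⟩ = xk := by
  simp [ins]

theorem restr_ins {X : ι → Type} {S : Finset ι} {k : ι} (hk : k ∈ S)
    (xk : X k) (u : (i : {j // j ∈ S.erase k}) → X i.1) :
    restr (erase_sub S k) (ins hk xk u) = u := by
  funext i
  have hne : i.1 ≠ k := (Finset.mem_erase.mp i.2).1
  simp [restr, ins, hne]

theorem ins_restr {X : ι → Type} {S : Finset ι} {k : ι} (hk : k ∈ S)
    (x : (i : {j // j ∈ S}) → X i.1) :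
    ins hk (x ⟨k, hk⟩) (restr (erase_sub S k) x) = x := by
  funext i
  by_cases h : i.1 = k
  · obtain ⟨iv, hi⟩ := i
    dsimp at h
    subst h
    simp [ins]
  · simp [ins, h, restr]

/-- Split a tuple on `S` into the value at `k` and the tuple on `S.erase k`. -/
def splitEquiv {X : ι → Type} {S : Finset ι} {k : ι} (hk : k ∈ S) :
    ((i : {j // j ∈ S}) → X i.1) ≃ (X k × ((i : {j // j ∈ S.erase k}) → X i.1)) where
  toFun a := (a ⟨k, hk⟩, restr (erase_sub S k) a)
  invFun p := ins hk p.1 p.2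
  left_inv a := ins_restr hk a
  right_inv p := Prod.ext (ins_apply_self hk p.1 p.2) (restr_ins hk p.1 p.2)

theorem restr_glue_left {X : ι → Type} {S K : Finset ι} (h : K ⊆ S)
    (u : (i : {j // j ∈ K}) → X i.1) (v : (i : {j // j ∈ S \ K}) → X i.1) :
    restr h (glue h u v) = u := by
  funext i
  simp [restr, glue, i.2]

theorem restr_glue_right {X : ι → Type} {S K : Finset ι} (h : K ⊆ S)
    (u : (i : {j // j ∈ K}) → X i.1) (v : (i : {j // j ∈ S \ K}) → X i.1) :
    restr (sdiff_sub S K) (glue h u v) = v := by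
  funext i
  have : i.1 ∉ K := (Finset.mem_sdiff.mp i.2).2
  simp [restr, glue, this]

theorem glue_restr {X : ι → Type} {S K : Finset ι} (h : K ⊆ S)
    (c : (i : {j // j ∈ S}) → X i.1) :
    glue h (restr h c) (restr (sdiff_sub S K) c) = c := by
  funext i
  by_cases hi : i.1 ∈ K <;> simp [glue, restr, hi]

theorem sum_glue_indicator {X : ι → Type} [∀ i, Fintype (X i)] [∀ i, DecidableEq (X i)]
    {S K : Finset ι} (h : K ⊆ S)
    (b : (i : {j // j ∈ K}) → X i.1) (c : (i : {j // j ∈ S}) → X i.1) :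
    (∑ v : (i : {j // j ∈ S \ K}) → X i.1, if glue h b v = c then (1:ℝ) else 0) =
      if b = restr h c then 1 else 0 := by
  have hiff : ∀ v, glue h b v = c ↔ (b = restr h c ∧ v = restr (sdiff_sub S K) c) := by
    intro v
    constructor
    · intro hg
      constructor
      · rw [← hg, restr_glue_left]
      · rw [← hg, restr_glue_right]
    · rintro ⟨hb, hv⟩
      rw [hb, hv, glue_restr]
  simp only [hiff]
  by_cases hb : b = restr h c
  · simp [hb]
  · simp [hb]

end Helpers

theorem causal_isProbDist {ι : Type} [DecidableEq ι] {X A : ι → Type} [∀ i, Fintype (A i)]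
    {S : Finset ι} {P : Corr X A S} (hP : IsCausal X A S P) : ∀ x, IsProbDist (P x) := by
  induction hP with
  | base k P hprob => exact hprob
  | step S hS P q Pfirst Prest hq hq1 hPfirst hPrest hmix ih =>
    intro x
    constructor
    · intro a
      rw [hmix]
      refine Finset.sum_nonneg fun k _ => ?_
      exact mul_nonneg (mul_nonneg (hq k) ((hPfirst k (x k)).1 _))
        ((ih k (x k) (a k) _).1 _)
    · calc ∑ a, P x a
          = ∑ a : (i : {j // j ∈ S}) → A i.1, ∑ k ∈ S.attach,
              q k * Pfirst k (x k) (a k) *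
              Prest k (x k) (a k) (restr (erase_sub S k.1) x) (restr (erase_sub S k.1) a) := by
            simp only [hmix]
        _ = ∑ k ∈ S.attach, ∑ a : (i : {j // j ∈ S}) → A i.1,
              q k * Pfirst k (x k) (a k) *
              Prest k (x k) (a k) (restr (erase_sub S k.1) x) (restr (erase_sub S k.1) a) :=
            Finset.sum_comm
        _ = ∑ k ∈ S.attach, q k := by
            refine Finset.sum_congr rfl fun k _ => ?_
            have he := Equiv.sum_comp (splitEquiv (X := A) k.2).symm
              (fun a => q k * Pfirst k (x k) (a k) *
                Prest k (x k) (a k) (restr (erase_sub S k.1) x)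
                  (restr (erase_sub S k.1) a))
            rw [← he]
            have : ∀ p : A k.1 × ((i : {j // j ∈ S.erase k.1}) → A i.1),
                (fun a => q k * Pfirst k (x k) (a k) *
                  Prest k (x k) (a k) (restr (erase_sub S k.1) x)
                    (restr (erase_sub S k.1) a)) ((splitEquiv k.2).symm p)
                = q k * Pfirst k (x k) p.1 *
                  Prest k (x k) p.1 (restr (erase_sub S k.1) x) p.2 := by
              intro p
              simp only [splitEquiv, Equiv.coe_fn_symm_mk]
              rw [ins_apply_self k.2 p.1 p.2, restr_ins k.2 p.1 p.2]
            rw [Fintype.sum_congr _ _ this, Fintype.sum_prod_type]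
            calc ∑ ak, ∑ u, q k * Pfirst k (x k) ak *
                  Prest k (x k) ak (restr (erase_sub S k.1) x) u
                = ∑ ak, q k * Pfirst k (x k) ak *
                    ∑ u, Prest k (x k) ak (restr (erase_sub S k.1) x) u := by
                  simp [Finset.mul_sum]
              _ = ∑ ak, q k * Pfirst k (x k) ak := by
                  refine Finset.sum_congr rfl fun ak _ => ?_
                  rw [(ih k (x k) ak _).2, mul_one]
              _ = q k := by
                  rw [← Finset.mul_sum, (hPfirst k (x k)).2, mul_one]
        _ = 1 := hq1

theorem key {ι : Type} [DecidableEq ι] {X A : ι → Type} [∀ i, Fintype (A i)]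
    [∀ i, DecidableEq (A i)] {S : Finset ι} {P : Corr X A S} (hP : IsCausal X A S P) :
    ∀ (α : ((i : {j // j ∈ S}) → X i.1) → ((i : {j // j ∈ S}) → A i.1)),
      (∀ x a, P x a = if a = α x then (1:ℝ) else 0) →
      ∀ x : (i : {j // j ∈ S}) → X i.1,
      ∃ K : ℕ → Finset ι,
        K 0 = ∅ ∧
        (∀ j, j ≤ S.card → K j ⊆ S ∧ (K j).card = j) ∧
        (∀ j, j < S.card → K j ⊆ K (j+1)) ∧
        (∀ j, j ≤ S.card → ∀ x', (∀ i : {i // i ∈ S}, i.1 ∈ K j → x' i = x i) →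
          ∀ i : {i // i ∈ S}, i.1 ∈ K j → α x' i = α x i) := by
  induction hP with
  | base k P hprob =>
    intro α hα x
    refine ⟨fun j => if j = 0 then ∅ else {k}, by simp, ?_, ?_, ?_⟩
    · intro j hj
      simp only [Finset.card_singleton] at hj
      interval_cases j <;> simp
    · intro j hj
      simp only [Finset.card_singleton] at hj
      interval_cases j <;> simp
    · intro j hj x' hagree i hi
      simp only [Finset.card_singleton] at hj
      interval_cases j
      · simp at hi
      · have hx : x' = x := by
          funext i'
          exact hagree i' (by simpa using i'.2)
        rw [hx]
  | step S hS P q Pfirst Prest hq hq1 hPfirst hPrest hmix ih =>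
    intro α hα x
    -- find a party acting first with positive weight
    obtain ⟨k, -, hk0⟩ := Finset.exists_ne_zero_of_sum_ne_zero (by rw [hq1]; norm_num :
      ∑ k ∈ S.attach, q k ≠ 0)
    have hqk : 0 < q k := lt_of_le_of_ne (hq k) (Ne.symm hk0)
    -- each first/rest term with positive weight is 1 at the deterministic output
    have hfact : ∀ y : (i : {j // j ∈ S}) → X i.1,
        Pfirst k (y k) (α y k) = 1 ∧
        Prest k (y k) (α y k) (restr (erase_sub S k.1) y) (restr (erase_sub S k.1) (α y)) = 1 := by
      intro y
      set t : {j // j ∈ S} → ℝ := fun k' =>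
        Pfirst k' (y k') (α y k') *
          Prest k' (y k') (α y k') (restr (erase_sub S k'.1) y) (restr (erase_sub S k'.1) (α y))
        with ht
      have ht01 : ∀ k', 0 ≤ t k' ∧ t k' ≤ 1 := by
        intro k'
        have h1 := hPfirst k' (y k')
        have h2 := causal_isProbDist (hPrest k' (y k') (α y k')) (restr (erase_sub S k'.1) y)
        constructor
        · exact mul_nonneg (h1.1 _) (h2.1 _)
        · calc t k' ≤ 1 * 1 :=
                mul_le_mul (prob_le_one h1 _) (prob_le_one h2 _) (h2.1 _) zero_le_one
            _ = 1 := mul_one 1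
      have hsum : ∑ k' ∈ S.attach, q k' * t k' = 1 := by
        have h := (hmix y (α y)).symm
        rw [hα y (α y), if_pos rfl] at h
        simp only [ht]
        simpa only [mul_assoc] using h
      have hzero : ∑ k' ∈ S.attach, q k' * (1 - t k') = 0 := by
        simp only [mul_sub, Finset.sum_sub_distrib, mul_one, hq1, hsum, sub_self]
      have heach := (Finset.sum_eq_zero_iff_of_nonneg
        (fun k' _ => mul_nonneg (hq k') (by linarith [(ht01 k').2]))).mp hzero
      have htk : t k = 1 := by
        have := heach k (Finset.mem_attach _ _)
        rcases mul_eq_zero.mp this with h | h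
        · exact absurd h (ne_of_gt hqk)
        · linarith
      have h1 := hPfirst k (y k)
      have h2 := causal_isProbDist (hPrest k (y k) (α y k)) (restr (erase_sub S k.1) y)
      have ha := h1.1 (α y k)
      have hb := h2.1 (restr (erase_sub S k.1) (α y))
      have ha1 := prob_le_one h1 (α y k)
      have hb1 := prob_le_one h2 (restr (erase_sub S k.1) (α y))
      simp only [ht] at htk
      constructor <;> nlinarith [htk]
    -- the output of party k depends only on its input
    have hfirst : ∀ y y' : (i : {j // j ∈ S}) → X i.1, y k = y' k → α y k = α y' k := by
      intro y y' hyy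
      have h1 := (hfact y).1
      have h2 := (hfact y').1
      rw [← hyy] at h2
      exact prob_unique_one (hPfirst k (y k)) h1 h2
    -- the rest correlation at x's input/output for k is deterministic
    set c : X k.1 := x k with hc
    set b : A k.1 := α x k with hb
    set β : ((i : {j // j ∈ S.erase k.1}) → X i.1) → ((i : {j // j ∈ S.erase k.1}) → A i.1) :=
      fun u => restr (erase_sub S k.1) (α (ins k.2 c u)) with hβ
    -- key fact: for any y with y k = c, the outputs away from k are given by β
    have hout : ∀ y : (i : {j // j ∈ S}) → X i.1, y k = c →
        restr (erase_sub S k.1) (α y) = β (restr (erase_sub S k.1) y) := by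
      intro y hy
      have h1 : ins k.2 c (restr (erase_sub S k.1) y) = y := by
        rw [← hy]
        exact ins_restr k.2 y
      simp only [hβ, h1]
    have hQdet : ∀ u a, Prest k c b u a = if a = β u then (1:ℝ) else 0 := by
      intro u a
      set y := ins k.2 c u with hy
      have hyk : y k = c := ins_apply_self k.2 c u
      have hab : α y k = b := hfirst y x hyk
      have h2 := (hfact y).2
      rw [hyk, hab, restr_ins] at h2
      have hβu : restr (erase_sub S k.1) (α y) = β u := by
        have h3 := hout y hyk
        rw [h3, hy, restr_ins]
      rw [hβu] at h2
      exact prob_one_delta (causal_isProbDist (hPrest k c b) u) h2 a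
    -- induction hypothesis for the remaining parties
    obtain ⟨K', hK'0, hK'cs, hK'chain, hK'prop⟩ :=
      ih k c b β hQdet (restr (erase_sub S k.1) x)
    have hcard : (S.erase k.1).card = S.card - 1 := Finset.card_erase_of_mem k.2
    refine ⟨fun j => if j = 0 then ∅ else insert k.1 (K' (j-1)), by simp, ?_, ?_, ?_⟩
    · intro j hj
      match j with
      | 0 => simp
      | (m+1) =>
        have hm : m ≤ (S.erase k.1).card := by omega
        obtain ⟨hsub, hcardm⟩ := hK'cs m hm
        have hknot : k.1 ∉ K' m := fun h => (Finset.mem_erase.mp (hsub h)).1 rfl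
        constructor
        · simp only [Nat.succ_ne_zero, if_false, Nat.add_sub_cancel]
          exact Finset.insert_subset k.2 (hsub.trans (erase_sub S k.1))
        · simp only [Nat.succ_ne_zero, if_false, Nat.add_sub_cancel]
          rw [Finset.card_insert_of_notMem hknot, hcardm]
    · intro j hj
      match j with
      | 0 => simp
      | (m+1) =>
        simp only [Nat.succ_ne_zero, if_false, Nat.add_sub_cancel]
        exact Finset.insert_subset_insert _ (hK'chain m (by omega))
    · intro j hj x' hagree i hi
      match j with
      | 0 => simp at hi
      | (m+1) =>
        simp only [Nat.succ_ne_zero, if_false, Nat.add_sub_cancel] at hi hagree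
        have hm : m ≤ (S.erase k.1).card := by omega
        have hx'k : x' k = x k := hagree k (Finset.mem_insert_self _ _)
        rcases Finset.mem_insert.mp hi with hik | hiK
        · have : i = k := Subtype.ext hik
          rw [this]
          exact hfirst x' x hx'k
        · have hsub := (hK'cs m hm).1
          have hie : i.1 ∈ S.erase k.1 := hsub hiK
          have hx'c : x' k = c := hx'k
          have h1 := hout x' hx'c
          have h2 := hout x rfl
          have hagree' : ∀ i' : {i' // i' ∈ S.erase k.1}, i'.1 ∈ K' m →
              restr (erase_sub S k.1) x' i' = restr (erase_sub S k.1) x i' := by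
            intro i' hi'
            exact hagree ⟨i'.1, erase_sub S k.1 i'.2⟩ (Finset.mem_insert_of_mem hi')
          have h3 := hK'prop m hm (restr (erase_sub S k.1) x') hagree' ⟨i.1, hie⟩ hiK
          have e1 : α x' i = restr (erase_sub S k.1) (α x') ⟨i.1, hie⟩ := rfl
          have e2 : α x i = restr (erase_sub S k.1) (α x) ⟨i.1, hie⟩ := rfl
          rw [e1, e2, h1, h2]
          exact h3

/-- for a deterministic causal correlation, each input list `x` determines a
chain of nested subsets of parties `K_1 ⊂ K_2 ⊂ … ⊂ K_N` with `|K_j| = j` (a causal order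
realized on input `x`), such that the marginal distribution for the parties in `K_j` depends
only on the inputs of the parties in `K_j`. -/
theorem deterministic_causal_nested_subsets (N : ℕ) (X A : Fin N → Type)
    [∀ i, Fintype (A i)] [∀ i, DecidableEq (A i)]
    (P : Corr X A Finset.univ)
    (α : ((i : {j // j ∈ (Finset.univ : Finset (Fin N))}) → X i.1) →
         ((i : {j // j ∈ (Finset.univ : Finset (Fin N))}) → A i.1))
    (hdet : ∀ x a, P x a = if a = α x then (1 : ℝ) else 0)
    (hP : IsCausal X A Finset.univ P)
    (x : (i : {j // j ∈ (Finset.univ : Finset (Fin N))}) → X i.1) :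
    ∃ K : Fin N → Finset (Fin N),
      (∀ j : Fin N, (K j).card = j.1 + 1) ∧ StrictMono K ∧
      ∀ (j : Fin N) (x' : (i : {j' // j' ∈ (Finset.univ : Finset (Fin N))}) → X i.1),
        (∀ i : {j' // j' ∈ (Finset.univ : Finset (Fin N))}, i.1 ∈ K j → x' i = x i) →
        ∀ b : (i : {j' // j' ∈ K j}) → A i.1,
          (∑ v : (i : {j' // j' ∈ Finset.univ \ K j}) → A i.1,
              P x' (glue (Finset.subset_univ (K j)) b v)) =
          (∑ v : (i : {j' // j' ∈ Finset.univ \ K j}) → A i.1,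
              P x (glue (Finset.subset_univ (K j)) b v)) := by
  obtain ⟨Kc, hK0, hKcs, hKchain, hprop⟩ := key hP α hdet x
  have hcardU : (Finset.univ : Finset (Fin N)).card = N := by
    rw [Finset.card_univ, Fintype.card_fin]
  have hmono : ∀ m n, m ≤ n → n ≤ N → Kc m ⊆ Kc n := by
    intro m n hmn hn
    induction n with
    | zero => simpa [Nat.le_zero.mp hmn] using Finset.Subset.refl _
    | succ n ihn =>
      rcases Nat.lt_or_ge m (n+1) with h | h
      · exact (ihn (by omega) (by omega)).trans (hKchain n (by omega))
      · have : m = n + 1 := by omega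
        rw [this]
  refine ⟨fun j => Kc (j.1 + 1), ?_, ?_, ?_⟩
  · intro j
    exact (hKcs (j.1 + 1) (by rw [hcardU]; omega)).2
  · intro a b hab
    dsimp only
    have hsub : Kc (a.1 + 1) ⊆ Kc (b.1 + 1) := hmono _ _ (by omega) (by omega)
    refine lt_of_le_of_ne (Finset.le_iff_subset.mpr hsub) ?_
    intro heq
    have ha := (hKcs (a.1 + 1) (by rw [hcardU]; omega)).2
    have hb := (hKcs (b.1 + 1) (by rw [hcardU]; omega)).2
    rw [heq, hb] at ha
    omega
  · intro j x' hagree b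
    have hα : restr (Finset.subset_univ (Kc (j.1 + 1))) (α x') =
        restr (Finset.subset_univ (Kc (j.1 + 1))) (α x) := by
      funext i
      exact hprop (j.1 + 1) (by rw [hcardU]; omega) x' hagree
        ⟨i.1, Finset.subset_univ _ i.2⟩ i.2
    calc (∑ v : (i : {j' // j' ∈ Finset.univ \ Kc (j.1 + 1)}) → A i.1,
            P x' (glue (Finset.subset_univ (Kc (j.1 + 1))) b v))
        = ∑ v : (i : {j' // j' ∈ Finset.univ \ Kc (j.1 + 1)}) → A i.1,
            if glue (Finset.subset_univ (Kc (j.1 + 1))) b v = α x' then (1:ℝ) else 0 := by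
          simp only [hdet]
      _ = if b = restr (Finset.subset_univ (Kc (j.1 + 1))) (α x') then 1 else 0 :=
          sum_glue_indicator _ b (α x')
      _ = if b = restr (Finset.subset_univ (Kc (j.1 + 1))) (α x) then 1 else 0 := by
          rw [hα]
      _ = ∑ v : (i : {j' // j' ∈ Finset.univ \ Kc (j.1 + 1)}) → A i.1,
            if glue (Finset.subset_univ (Kc (j.1 + 1))) b v = α x then (1:ℝ) else 0 :=
          (sum_glue_indicator _ b (α x)).symm
      _ = ∑ v : (i : {j' // j' ∈ Finset.univ \ Kc (j.1 + 1)}) → A i.1,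
            P x (glue (Finset.subset_univ (Kc (j.1 + 1))) b v) := by
          simp only [hdet]
end

section
/- For every causal tripartite correlation P(a,b,c|x,y,z) with binary inputs x,y,z ∈ {0,1} and binary outputs a,b,c ∈ {0,1}, and for each fixed z ∈ {0,1}, the conditional lazy-guess-your-neighbor's-input (LGYNI) inequality holds: P_A(1|1,0,z) + P_B(1|0,1,z) − P_{AB}(1,1|1,1,z) ≥ 0, where P_A(a|x,y,z) := Σ_{b,c} P(a,b,c|x,y,z), P_B(b|x,y,z) := Σ_{a,c} P(a,b,c|x,y,z), and P_{AB}(a,b|x,y,z) := Σ_c P(a,b,c|x,y,z). -/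
/-- Tripartite correlations with binary inputs and binary outputs for the three parties
`A`, `B`, `C` (encoding input/output `0` as `false` and `1` as `true`). -/
abbrev Corr3 : Type := Corr (fun _ : Fin 3 => Bool) (fun _ : Fin 3 => Bool) Finset.univ

/-- The triple `(u, v, w)` as an input (or output) assignment for the three parties. -/
def t3 (u v w : Bool) : (i : {j // j ∈ (Finset.univ : Finset (Fin 3))}) → Bool :=
  fun i => ![u, v, w] i.1

-- ############ helpers ############

theorem causal_nonneg {ι : Type} [DecidableEq ι] {X A : ι → Type} [∀ i, Fintype (A i)]
    {S : Finset ι} {P : Corr X A S} (h : IsCausal X A S P) :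
    ∀ x a, 0 ≤ P x a := by
  induction h with
  | base k P hP => exact fun x a => (hP x).1 a
  | step S hS P q Pf Pr hq hq1 hPf hPr hP ih =>
    intro x a
    rw [hP]
    refine Finset.sum_nonneg fun k _ => ?_
    exact mul_nonneg (mul_nonneg (hq k) ((hPf k (x k)).1 (a k))) (ih k (x k) (a k) _ _)

def splitE {ι : Type} [DecidableEq ι] {S : Finset ι} (k : ι) (hk : k ∈ S) :
    ({j // j ∈ S} → Bool) ≃ Bool × ({j // j ∈ S.erase k} → Bool) where
  toFun a := (a ⟨k, hk⟩, restr (X := fun _ => Bool) (erase_sub S k) a)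
  invFun p i := if h : i.1 = k then p.1 else p.2 ⟨i.1, Finset.mem_erase.mpr ⟨h, i.2⟩⟩
  left_inv a := by
    funext i
    by_cases h : i.1 = k
    · simp only [dif_pos h]
      exact congrArg a (Subtype.ext h.symm)
    · simp only [dif_neg h]; rfl
  right_inv p := by
    refine Prod.ext ?_ ?_
    · simp
    · funext i
      have hne : i.1 ≠ k := (Finset.mem_erase.mp i.2).1
      simp only [restr, dif_neg hne]

theorem causal_sum_one {ι : Type} [DecidableEq ι] {X : ι → Type}
    {S : Finset ι} {P : Corr X (fun _ => Bool) S}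
    (h : IsCausal X (fun _ => Bool) S P) : ∀ x, ∑ a, P x a = 1 := by
  induction h with
  | base k P hP => exact fun x => (hP x).2
  | step S hS P q Pf Pr hq hq1 hPf hPr hP ih =>
    intro x
    have key : ∀ k ∈ S.attach, (∑ a : ({j // j ∈ S} → Bool), q k * Pf k (x k) (a k) *
        Pr k (x k) (a k) (restr (erase_sub S k.1) x) (restr (X := fun _ => Bool) (erase_sub S k.1) a)) = q k := by
      intro k _
      have e := Fintype.sum_equiv (splitE k.1 k.2)
        (fun a => q k * Pf k (x k) (a ⟨k.1, k.2⟩) * Pr k (x k) (a ⟨k.1, k.2⟩)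
          (restr (erase_sub S k.1) x) (restr (X := fun _ => Bool) (erase_sub S k.1) a))
        (fun p => q k * Pf k (x k) p.1 * Pr k (x k) p.1 (restr (erase_sub S k.1) x) p.2)
        (fun a => rfl)
      calc ∑ a : ({j // j ∈ S} → Bool), q k * Pf k (x k) (a k) * Pr k (x k) (a k)
              (restr (erase_sub S k.1) x) (restr (X := fun _ => Bool) (erase_sub S k.1) a)
          = ∑ p : Bool × _, q k * Pf k (x k) p.1 * Pr k (x k) p.1
              (restr (erase_sub S k.1) x) p.2 := e
        _ = ∑ b : Bool, ∑ u, q k * Pf k (x k) b * Pr k (x k) b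
              (restr (erase_sub S k.1) x) u := Fintype.sum_prod_type _
        _ = ∑ b : Bool, q k * Pf k (x k) b * ∑ u, Pr k (x k) b
              (restr (erase_sub S k.1) x) u := by
              exact Finset.sum_congr rfl fun b _ => (Finset.mul_sum _ _ _).symm
        _ = ∑ b : Bool, q k * Pf k (x k) b := by
              refine Finset.sum_congr rfl fun b _ => ?_
              rw [ih k (x k) b (restr (erase_sub S k.1) x), mul_one]
        _ = q k * ∑ b : Bool, Pf k (x k) b := (Finset.mul_sum _ _ _).symm
        _ = q k := by rw [(hPf k (x k)).2, mul_one]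
    calc ∑ a, P x a
        = ∑ a : ({j // j ∈ S} → Bool), ∑ k ∈ S.attach, q k * Pf k (x k) (a k) * Pr k (x k) (a k)
            (restr (erase_sub S k.1) x) (restr (X := fun _ => Bool) (erase_sub S k.1) a) := by
          exact Finset.sum_congr rfl fun a _ => hP x a
      _ = ∑ k ∈ S.attach, ∑ a : ({j // j ∈ S} → Bool), q k * Pf k (x k) (a k) * Pr k (x k) (a k)
            (restr (erase_sub S k.1) x) (restr (X := fun _ => Bool) (erase_sub S k.1) a) := Finset.sum_comm
      _ = ∑ k ∈ S.attach, q k := Finset.sum_congr rfl key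
      _ = 1 := hq1

theorem causal_step {ι : Type} [DecidableEq ι] {X A : ι → Type} [∀ i, Fintype (A i)]
    {S : Finset ι} {P : Corr X A S} (h : IsCausal X A S P) (hS2 : 2 ≤ S.card) :
    ∃ (q : {j // j ∈ S} → ℝ) (Pf : (k : {j // j ∈ S}) → X k.1 → A k.1 → ℝ)
      (Pr : (k : {j // j ∈ S}) → X k.1 → A k.1 → Corr X A (S.erase k.1)),
      (∀ k, 0 ≤ q k) ∧ (∀ k xk, IsProbDist (Pf k xk)) ∧
      (∀ k xk ak, IsCausal X A (S.erase k.1) (Pr k xk ak)) ∧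
      (∀ x a, P x a = ∑ k ∈ S.attach, q k * Pf k (x k) (a k) *
        Pr k (x k) (a k) (restr (erase_sub S k.1) x) (restr (erase_sub S k.1) a)) := by
  cases h with
  | base k P hP => simp at hS2
  | step S hS P q Pf Pr hq hq1 hPf hPr hP => exact ⟨q, Pf, Pr, hq, hPf, hPr, hP⟩

theorem sum_single {α : Type} [Fintype α] [DecidableEq α] (x0 : α) (hx : ∀ y, y = x0)
    (g : Bool → α → Bool) (hg : ∀ v, g v x0 = v) (Q : (α → Bool) → ℝ) :
    ∑ f, Q f = ∑ v, Q (g v) := by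
  have linv : ∀ f : α → Bool, g (f x0) = f := by
    intro f; funext y; rw [hx y, hg]
  exact Fintype.sum_equiv ⟨fun f => f x0, fun v => g v, fun f => linv f, fun v => hg v⟩
    Q (fun v => Q (g v)) (fun f => congrArg Q (linv f).symm)

theorem sum_two {α : Type} [Fintype α] [DecidableEq α] (x0 x1 : α)
    (hx : ∀ y, y = x0 ∨ y = x1) (g : Bool → Bool → α → Bool)
    (hg0 : ∀ v w, g v w x0 = v) (hg1 : ∀ v w, g v w x1 = w) (Q : (α → Bool) → ℝ) :
    ∑ f, Q f = ∑ v, ∑ w, Q (g v w) := by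
  have linv : ∀ f : α → Bool, g (f x0) (f x1) = f := by
    intro f; funext y
    rcases hx y with h | h
    · rw [h, hg0]
    · rw [h, hg1]
  calc ∑ f, Q f = ∑ p : Bool × Bool, Q (g p.1 p.2) :=
        Fintype.sum_equiv ⟨fun f => (f x0, f x1), fun p => g p.1 p.2, fun f => linv f,
          fun p => Prod.ext (hg0 p.1 p.2) (hg1 p.1 p.2)⟩ Q _
          (fun f => congrArg Q (linv f).symm)
    _ = ∑ v, ∑ w, Q (g v w) := Fintype.sum_prod_type _

theorem keyB {α : Type} (s : Finset α) (F G : Bool → α → ℝ) (H : α → ℝ)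
    (h : ∀ k ∈ s, 0 ≤ (∑ b : Bool, F b k) + (∑ a : Bool, G a k) - H k) :
    0 ≤ (∑ b : Bool, ∑ k ∈ s, F b k) + (∑ a : Bool, ∑ k ∈ s, G a k) - (∑ k ∈ s, H k) := by
  have e1 : (∑ b : Bool, ∑ k ∈ s, F b k) = ∑ k ∈ s, ∑ b : Bool, F b k := Finset.sum_comm
  have e2 : (∑ a : Bool, ∑ k ∈ s, G a k) = ∑ k ∈ s, ∑ a : Bool, G a k := Finset.sum_comm
  rw [e1, e2, ← Finset.sum_add_distrib, ← Finset.sum_sub_distrib]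
  exact Finset.sum_nonneg h

theorem keyA {α : Type} (s : Finset α) (F G : Bool → Bool → α → ℝ) (H : Bool → α → ℝ)
    (h : ∀ k ∈ s, 0 ≤ (∑ b : Bool, ∑ c : Bool, F b c k)
        + (∑ a : Bool, ∑ c : Bool, G a c k) - (∑ c : Bool, H c k)) :
    0 ≤ (∑ b : Bool, ∑ c : Bool, ∑ k ∈ s, F b c k)
      + (∑ a : Bool, ∑ c : Bool, ∑ k ∈ s, G a c k) - (∑ c : Bool, ∑ k ∈ s, H c k) := by
  have e1 : (∑ b : Bool, ∑ c : Bool, ∑ k ∈ s, F b c k)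
      = ∑ k ∈ s, ∑ b : Bool, ∑ c : Bool, F b c k :=
    (Finset.sum_congr rfl fun b _ => Finset.sum_comm).trans Finset.sum_comm
  have e2 : (∑ a : Bool, ∑ c : Bool, ∑ k ∈ s, G a c k)
      = ∑ k ∈ s, ∑ a : Bool, ∑ c : Bool, G a c k :=
    (Finset.sum_congr rfl fun a _ => Finset.sum_comm).trans Finset.sum_comm
  have e3 : (∑ c : Bool, ∑ k ∈ s, H c k) = ∑ k ∈ s, ∑ c : Bool, H c k := Finset.sum_comm
  rw [e1, e2, e3, ← Finset.sum_add_distrib, ← Finset.sum_sub_distrib]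
  exact Finset.sum_nonneg h

/-- The triple `(u,v,w)` restricted to the parties in `T`. -/
def rt (u v w : Bool) (T : Finset (Fin 3)) : {j // j ∈ T} → Bool :=
  fun i => ![u, v, w] i.1

/-- Bracket inequality when party `A` (index 0) acts first. -/
theorem brA {q0 : ℝ} {Pf0 : Bool → Bool → ℝ}
    {R : Bool → Bool → Corr (fun _ : Fin 3 => Bool) (fun _ : Fin 3 => Bool)
      (Finset.univ.erase 0)}
    (hq0 : 0 ≤ q0) (hPf0 : ∀ x, IsProbDist (Pf0 x))
    (hR : ∀ x a, IsCausal (fun _ : Fin 3 => Bool) (fun _ : Fin 3 => Bool)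
      (Finset.univ.erase 0) (R x a)) (z : Bool) :
    0 ≤ (∑ b : Bool, ∑ c : Bool, q0 * Pf0 true true
          * R true true (rt true false z (Finset.univ.erase 0)) (rt true b c (Finset.univ.erase 0)))
      + (∑ a : Bool, ∑ c : Bool, q0 * Pf0 false a
          * R false a (rt false true z (Finset.univ.erase 0)) (rt a true c (Finset.univ.erase 0)))
      - (∑ c : Bool, q0 * Pf0 true true
          * R true true (rt true true z (Finset.univ.erase 0)) (rt true true c (Finset.univ.erase 0))) := by
  have hx : ∀ y : {j // j ∈ (Finset.univ : Finset (Fin 3)).erase 0},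
      y = ⟨1, by decide⟩ ∨ y = ⟨2, by decide⟩ := by decide
  have S1 : (∑ b : Bool, ∑ c : Bool,
      R true true (rt true false z (Finset.univ.erase 0)) (rt true b c (Finset.univ.erase 0))) = 1 :=
    (sum_two (⟨1, by decide⟩ : {j // j ∈ (Finset.univ : Finset (Fin 3)).erase 0})
      (⟨2, by decide⟩ : {j // j ∈ (Finset.univ : Finset (Fin 3)).erase 0}) hx
      (fun v w => rt true v w (Finset.univ.erase 0))
      (fun v w => rfl) (fun v w => rfl) _).symm.trans (causal_sum_one (hR true true) _)
  have Sfull : (∑ b : Bool, ∑ c : Bool,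
      R true true (rt true true z (Finset.univ.erase 0)) (rt true b c (Finset.univ.erase 0))) = 1 :=
    (sum_two (⟨1, by decide⟩ : {j // j ∈ (Finset.univ : Finset (Fin 3)).erase 0})
      (⟨2, by decide⟩ : {j // j ∈ (Finset.univ : Finset (Fin 3)).erase 0}) hx
      (fun v w => rt true v w (Finset.univ.erase 0))
      (fun v w => rfl) (fun v w => rfl) _).symm.trans (causal_sum_one (hR true true) _)
  have hnn : ∀ u, 0 ≤ R true true (rt true true z (Finset.univ.erase 0)) u :=
    fun u => causal_nonneg (hR true true) _ u
  have S3 : (∑ c : Bool,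
      R true true (rt true true z (Finset.univ.erase 0)) (rt true true c (Finset.univ.erase 0))) ≤ 1 := by
    rw [Fintype.sum_bool] at Sfull
    have h0 : 0 ≤ ∑ c : Bool,
        R true true (rt true true z (Finset.univ.erase 0)) (rt true false c (Finset.univ.erase 0)) :=
      Finset.sum_nonneg fun c _ => hnn _
    linarith
  have S2 : 0 ≤ ∑ a : Bool, ∑ c : Bool, q0 * Pf0 false a
      * R false a (rt false true z (Finset.univ.erase 0)) (rt a true c (Finset.univ.erase 0)) :=
    Finset.sum_nonneg fun a _ => Finset.sum_nonneg fun c _ =>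
      mul_nonneg (mul_nonneg hq0 ((hPf0 false).1 a)) (causal_nonneg (hR false a) _ _)
  have hqP : 0 ≤ q0 * Pf0 true true := mul_nonneg hq0 ((hPf0 true).1 true)
  have E1 : (∑ b : Bool, ∑ c : Bool, q0 * Pf0 true true
      * R true true (rt true false z (Finset.univ.erase 0)) (rt true b c (Finset.univ.erase 0)))
      = q0 * Pf0 true true := by
    simp only [← Finset.mul_sum]
    rw [S1, mul_one]
  have E3 : (∑ c : Bool, q0 * Pf0 true true
      * R true true (rt true true z (Finset.univ.erase 0)) (rt true true c (Finset.univ.erase 0)))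
      ≤ q0 * Pf0 true true := by
    rw [← Finset.mul_sum]
    calc q0 * Pf0 true true * (∑ c : Bool,
          R true true (rt true true z (Finset.univ.erase 0)) (rt true true c (Finset.univ.erase 0)))
        ≤ q0 * Pf0 true true * 1 := mul_le_mul_of_nonneg_left S3 hqP
      _ = q0 * Pf0 true true := mul_one _
  linarith

/-- Bracket inequality when party `B` (index 1) acts first. -/
theorem brB {q0 : ℝ} {Pf0 : Bool → Bool → ℝ}
    {R : Bool → Bool → Corr (fun _ : Fin 3 => Bool) (fun _ : Fin 3 => Bool)
      (Finset.univ.erase 1)}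
    (hq0 : 0 ≤ q0) (hPf0 : ∀ x, IsProbDist (Pf0 x))
    (hR : ∀ x a, IsCausal (fun _ : Fin 3 => Bool) (fun _ : Fin 3 => Bool)
      (Finset.univ.erase 1) (R x a)) (z : Bool) :
    0 ≤ (∑ b : Bool, ∑ c : Bool, q0 * Pf0 false b
          * R false b (rt true false z (Finset.univ.erase 1)) (rt true b c (Finset.univ.erase 1)))
      + (∑ a : Bool, ∑ c : Bool, q0 * Pf0 true true
          * R true true (rt false true z (Finset.univ.erase 1)) (rt a true c (Finset.univ.erase 1)))
      - (∑ c : Bool, q0 * Pf0 true true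
          * R true true (rt true true z (Finset.univ.erase 1)) (rt true true c (Finset.univ.erase 1))) := by
  have hx : ∀ y : {j // j ∈ (Finset.univ : Finset (Fin 3)).erase 1},
      y = ⟨0, by decide⟩ ∨ y = ⟨2, by decide⟩ := by decide
  have S1 : (∑ a : Bool, ∑ c : Bool,
      R true true (rt false true z (Finset.univ.erase 1)) (rt a true c (Finset.univ.erase 1))) = 1 :=
    (sum_two (⟨0, by decide⟩ : {j // j ∈ (Finset.univ : Finset (Fin 3)).erase 1})
      (⟨2, by decide⟩ : {j // j ∈ (Finset.univ : Finset (Fin 3)).erase 1}) hx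
      (fun v w => rt v true w (Finset.univ.erase 1))
      (fun v w => rfl) (fun v w => rfl) _).symm.trans (causal_sum_one (hR true true) _)
  have Sfull : (∑ a : Bool, ∑ c : Bool,
      R true true (rt true true z (Finset.univ.erase 1)) (rt a true c (Finset.univ.erase 1))) = 1 :=
    (sum_two (⟨0, by decide⟩ : {j // j ∈ (Finset.univ : Finset (Fin 3)).erase 1})
      (⟨2, by decide⟩ : {j // j ∈ (Finset.univ : Finset (Fin 3)).erase 1}) hx
      (fun v w => rt v true w (Finset.univ.erase 1))
      (fun v w => rfl) (fun v w => rfl) _).symm.trans (causal_sum_one (hR true true) _)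
  have hnn : ∀ u, 0 ≤ R true true (rt true true z (Finset.univ.erase 1)) u :=
    fun u => causal_nonneg (hR true true) _ u
  have S3 : (∑ c : Bool,
      R true true (rt true true z (Finset.univ.erase 1)) (rt true true c (Finset.univ.erase 1))) ≤ 1 := by
    rw [Fintype.sum_bool] at Sfull
    have h0 : 0 ≤ ∑ c : Bool,
        R true true (rt true true z (Finset.univ.erase 1)) (rt false true c (Finset.univ.erase 1)) :=
      Finset.sum_nonneg fun c _ => hnn _
    linarith
  have S2 : 0 ≤ ∑ b : Bool, ∑ c : Bool, q0 * Pf0 false b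
      * R false b (rt true false z (Finset.univ.erase 1)) (rt true b c (Finset.univ.erase 1)) :=
    Finset.sum_nonneg fun b _ => Finset.sum_nonneg fun c _ =>
      mul_nonneg (mul_nonneg hq0 ((hPf0 false).1 b)) (causal_nonneg (hR false b) _ _)
  have hqP : 0 ≤ q0 * Pf0 true true := mul_nonneg hq0 ((hPf0 true).1 true)
  have E1 : (∑ a : Bool, ∑ c : Bool, q0 * Pf0 true true
      * R true true (rt false true z (Finset.univ.erase 1)) (rt a true c (Finset.univ.erase 1)))
      = q0 * Pf0 true true := by
    simp only [← Finset.mul_sum]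
    rw [S1, mul_one]
  have E3 : (∑ c : Bool, q0 * Pf0 true true
      * R true true (rt true true z (Finset.univ.erase 1)) (rt true true c (Finset.univ.erase 1)))
      ≤ q0 * Pf0 true true := by
    rw [← Finset.mul_sum]
    calc q0 * Pf0 true true * (∑ c : Bool,
          R true true (rt true true z (Finset.univ.erase 1)) (rt true true c (Finset.univ.erase 1)))
        ≤ q0 * Pf0 true true * 1 := mul_le_mul_of_nonneg_left S3 hqP
      _ = q0 * Pf0 true true := mul_one _
  linarith

/-- Bipartite bracket: party 0 acts first among `{0,1}`. -/
theorem br2A {q0 : ℝ} {Pf0 : Bool → Bool → ℝ}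
    {R : Bool → Bool → Corr (fun _ : Fin 3 => Bool) (fun _ : Fin 3 => Bool)
      ((Finset.univ.erase 2).erase 0)}
    (hq0 : 0 ≤ q0) (hPf0 : ∀ x, IsProbDist (Pf0 x))
    (hR : ∀ x a, IsCausal (fun _ : Fin 3 => Bool) (fun _ : Fin 3 => Bool)
      ((Finset.univ.erase 2).erase 0) (R x a)) (z c1 c2 c3 : Bool) :
    0 ≤ (∑ b : Bool, q0 * Pf0 true true
          * R true true (rt true false z ((Finset.univ.erase 2).erase 0))
              (rt true b c1 ((Finset.univ.erase 2).erase 0)))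
      + (∑ a : Bool, q0 * Pf0 false a
          * R false a (rt false true z ((Finset.univ.erase 2).erase 0))
              (rt a true c2 ((Finset.univ.erase 2).erase 0)))
      - q0 * Pf0 true true
          * R true true (rt true true z ((Finset.univ.erase 2).erase 0))
              (rt true true c3 ((Finset.univ.erase 2).erase 0)) := by
  have hx : ∀ y : {j // j ∈ ((Finset.univ : Finset (Fin 3)).erase 2).erase 0},
      y = ⟨1, by decide⟩ := by decide
  have S1 : (∑ b : Bool,
      R true true (rt true false z ((Finset.univ.erase 2).erase 0))
        (rt true b c1 ((Finset.univ.erase 2).erase 0))) = 1 :=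
    (sum_single (⟨1, by decide⟩ : {j // j ∈ ((Finset.univ : Finset (Fin 3)).erase 2).erase 0}) hx
      (fun v => rt true v c1 ((Finset.univ.erase 2).erase 0))
      (fun v => rfl) _).symm.trans (causal_sum_one (hR true true) _)
  have Sfull : (∑ b : Bool,
      R true true (rt true true z ((Finset.univ.erase 2).erase 0))
        (rt true b c3 ((Finset.univ.erase 2).erase 0))) = 1 :=
    (sum_single (⟨1, by decide⟩ : {j // j ∈ ((Finset.univ : Finset (Fin 3)).erase 2).erase 0}) hx
      (fun v => rt true v c3 ((Finset.univ.erase 2).erase 0))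
      (fun v => rfl) _).symm.trans (causal_sum_one (hR true true) _)
  have hnn : ∀ u, 0 ≤ R true true (rt true true z ((Finset.univ.erase 2).erase 0)) u :=
    fun u => causal_nonneg (hR true true) _ u
  have S3 : R true true (rt true true z ((Finset.univ.erase 2).erase 0))
      (rt true true c3 ((Finset.univ.erase 2).erase 0)) ≤ 1 := by
    rw [Fintype.sum_bool] at Sfull
    have h0 := hnn (rt true false c3 ((Finset.univ.erase 2).erase 0))
    linarith
  have S2 : 0 ≤ ∑ a : Bool, q0 * Pf0 false a
      * R false a (rt false true z ((Finset.univ.erase 2).erase 0))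
          (rt a true c2 ((Finset.univ.erase 2).erase 0)) :=
    Finset.sum_nonneg fun a _ =>
      mul_nonneg (mul_nonneg hq0 ((hPf0 false).1 a)) (causal_nonneg (hR false a) _ _)
  have hqP : 0 ≤ q0 * Pf0 true true := mul_nonneg hq0 ((hPf0 true).1 true)
  have E1 : (∑ b : Bool, q0 * Pf0 true true
      * R true true (rt true false z ((Finset.univ.erase 2).erase 0))
          (rt true b c1 ((Finset.univ.erase 2).erase 0))) = q0 * Pf0 true true := by
    rw [← Finset.mul_sum, S1, mul_one]
  have E3 : q0 * Pf0 true true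
      * R true true (rt true true z ((Finset.univ.erase 2).erase 0))
          (rt true true c3 ((Finset.univ.erase 2).erase 0)) ≤ q0 * Pf0 true true := by
    calc q0 * Pf0 true true * R true true (rt true true z ((Finset.univ.erase 2).erase 0))
          (rt true true c3 ((Finset.univ.erase 2).erase 0))
        ≤ q0 * Pf0 true true * 1 := mul_le_mul_of_nonneg_left S3 hqP
      _ = q0 * Pf0 true true := mul_one _
  linarith

/-- Bipartite bracket: party 1 acts first among `{0,1}`. -/
theorem br2B {q0 : ℝ} {Pf0 : Bool → Bool → ℝ}
    {R : Bool → Bool → Corr (fun _ : Fin 3 => Bool) (fun _ : Fin 3 => Bool)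
      ((Finset.univ.erase 2).erase 1)}
    (hq0 : 0 ≤ q0) (hPf0 : ∀ x, IsProbDist (Pf0 x))
    (hR : ∀ x a, IsCausal (fun _ : Fin 3 => Bool) (fun _ : Fin 3 => Bool)
      ((Finset.univ.erase 2).erase 1) (R x a)) (z c1 c2 c3 : Bool) :
    0 ≤ (∑ b : Bool, q0 * Pf0 false b
          * R false b (rt true false z ((Finset.univ.erase 2).erase 1))
              (rt true b c1 ((Finset.univ.erase 2).erase 1)))
      + (∑ a : Bool, q0 * Pf0 true true
          * R true true (rt false true z ((Finset.univ.erase 2).erase 1))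
              (rt a true c2 ((Finset.univ.erase 2).erase 1)))
      - q0 * Pf0 true true
          * R true true (rt true true z ((Finset.univ.erase 2).erase 1))
              (rt true true c3 ((Finset.univ.erase 2).erase 1)) := by
  have hx : ∀ y : {j // j ∈ ((Finset.univ : Finset (Fin 3)).erase 2).erase 1},
      y = ⟨0, by decide⟩ := by decide
  have S1 : (∑ a : Bool,
      R true true (rt false true z ((Finset.univ.erase 2).erase 1))
        (rt a true c2 ((Finset.univ.erase 2).erase 1))) = 1 :=
    (sum_single (⟨0, by decide⟩ : {j // j ∈ ((Finset.univ : Finset (Fin 3)).erase 2).erase 1}) hx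
      (fun v => rt v true c2 ((Finset.univ.erase 2).erase 1))
      (fun v => rfl) _).symm.trans (causal_sum_one (hR true true) _)
  have Sfull : (∑ a : Bool,
      R true true (rt true true z ((Finset.univ.erase 2).erase 1))
        (rt a true c3 ((Finset.univ.erase 2).erase 1))) = 1 :=
    (sum_single (⟨0, by decide⟩ : {j // j ∈ ((Finset.univ : Finset (Fin 3)).erase 2).erase 1}) hx
      (fun v => rt v true c3 ((Finset.univ.erase 2).erase 1))
      (fun v => rfl) _).symm.trans (causal_sum_one (hR true true) _)
  have hnn : ∀ u, 0 ≤ R true true (rt true true z ((Finset.univ.erase 2).erase 1)) u :=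
    fun u => causal_nonneg (hR true true) _ u
  have S3 : R true true (rt true true z ((Finset.univ.erase 2).erase 1))
      (rt true true c3 ((Finset.univ.erase 2).erase 1)) ≤ 1 := by
    rw [Fintype.sum_bool] at Sfull
    have h0 := hnn (rt false true c3 ((Finset.univ.erase 2).erase 1))
    linarith
  have S2 : 0 ≤ ∑ b : Bool, q0 * Pf0 false b
      * R false b (rt true false z ((Finset.univ.erase 2).erase 1))
          (rt true b c1 ((Finset.univ.erase 2).erase 1)) :=
    Finset.sum_nonneg fun b _ =>
      mul_nonneg (mul_nonneg hq0 ((hPf0 false).1 b)) (causal_nonneg (hR false b) _ _)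
  have hqP : 0 ≤ q0 * Pf0 true true := mul_nonneg hq0 ((hPf0 true).1 true)
  have E1 : (∑ a : Bool, q0 * Pf0 true true
      * R true true (rt false true z ((Finset.univ.erase 2).erase 1))
          (rt a true c2 ((Finset.univ.erase 2).erase 1))) = q0 * Pf0 true true := by
    rw [← Finset.mul_sum, S1, mul_one]
  have E3 : q0 * Pf0 true true
      * R true true (rt true true z ((Finset.univ.erase 2).erase 1))
          (rt true true c3 ((Finset.univ.erase 2).erase 1)) ≤ q0 * Pf0 true true := by
    calc q0 * Pf0 true true * R true true (rt true true z ((Finset.univ.erase 2).erase 1))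
          (rt true true c3 ((Finset.univ.erase 2).erase 1))
        ≤ q0 * Pf0 true true * 1 := mul_le_mul_of_nonneg_left S3 hqP
      _ = q0 * Pf0 true true := mul_one _
  linarith

theorem fin3_cases (i : Fin 3) : i = 0 ∨ i = 1 ∨ i = 2 := by fin_cases i <;> simp

/-- Bipartite conditional LGYNI inequality for causal correlations on `{0,1}`. -/
theorem lgyni2 {Q : Corr (fun _ : Fin 3 => Bool) (fun _ : Fin 3 => Bool) (Finset.univ.erase 2)}
    (hQ : IsCausal (fun _ : Fin 3 => Bool) (fun _ : Fin 3 => Bool) (Finset.univ.erase 2) Q)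
    (z c1 c2 c3 : Bool) :
    0 ≤ (∑ b : Bool, Q (rt true false z (Finset.univ.erase 2)) (rt true b c1 (Finset.univ.erase 2)))
      + (∑ a : Bool, Q (rt false true z (Finset.univ.erase 2)) (rt a true c2 (Finset.univ.erase 2)))
      - Q (rt true true z (Finset.univ.erase 2)) (rt true true c3 (Finset.univ.erase 2)) := by
  obtain ⟨q, Pf, Pr, hq, hPf, hPr, hEq⟩ := causal_step hQ (by decide)
  simp only [hEq]
  refine keyB _ _ _ _ ?_
  intro k _
  obtain ⟨kv, hkv⟩ := k
  rcases fin3_cases kv with rfl | rfl | rfl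
  · exact br2A (hq _) (hPf _) (hPr ⟨0, hkv⟩) z c1 c2 c3
  · exact br2B (hq _) (hPf _) (hPr ⟨1, hkv⟩) z c1 c2 c3
  · exact absurd hkv (by decide)

/-- Bracket inequality when party `C` (index 2) acts first. -/
theorem brC {q0 : ℝ} {Pf0 : Bool → Bool → ℝ}
    {R : Bool → Bool → Corr (fun _ : Fin 3 => Bool) (fun _ : Fin 3 => Bool)
      (Finset.univ.erase 2)}
    (hq0 : 0 ≤ q0) (hPf0 : ∀ x, IsProbDist (Pf0 x))
    (hR : ∀ x a, IsCausal (fun _ : Fin 3 => Bool) (fun _ : Fin 3 => Bool)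
      (Finset.univ.erase 2) (R x a)) (z : Bool) :
    0 ≤ (∑ b : Bool, ∑ c : Bool, q0 * Pf0 z c
          * R z c (rt true false z (Finset.univ.erase 2)) (rt true b c (Finset.univ.erase 2)))
      + (∑ a : Bool, ∑ c : Bool, q0 * Pf0 z c
          * R z c (rt false true z (Finset.univ.erase 2)) (rt a true c (Finset.univ.erase 2)))
      - (∑ c : Bool, q0 * Pf0 z c
          * R z c (rt true true z (Finset.univ.erase 2)) (rt true true c (Finset.univ.erase 2))) := by
  refine keyB _ _ _ _ ?_
  intro c _
  have lg := lgyni2 (hR z c) z c c c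
  have hnn : 0 ≤ q0 * Pf0 z c := mul_nonneg hq0 ((hPf0 z).1 c)
  have key := mul_nonneg hnn lg
  have expand : q0 * Pf0 z c *
      ((∑ b : Bool, R z c (rt true false z (Finset.univ.erase 2)) (rt true b c (Finset.univ.erase 2)))
        + (∑ a : Bool, R z c (rt false true z (Finset.univ.erase 2)) (rt a true c (Finset.univ.erase 2)))
        - R z c (rt true true z (Finset.univ.erase 2)) (rt true true c (Finset.univ.erase 2)))
      = (∑ b : Bool, q0 * Pf0 z c
          * R z c (rt true false z (Finset.univ.erase 2)) (rt true b c (Finset.univ.erase 2)))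
        + (∑ a : Bool, q0 * Pf0 z c
          * R z c (rt false true z (Finset.univ.erase 2)) (rt a true c (Finset.univ.erase 2)))
        - q0 * Pf0 z c
          * R z c (rt true true z (Finset.univ.erase 2)) (rt true true c (Finset.univ.erase 2)) := by
    rw [mul_sub, mul_add, Finset.mul_sum, Finset.mul_sum]
  rw [expand] at key
  linarith


/-- every causal tripartite correlation with binary inputs and outputs
satisfies, for each fixed input `z` of the third party, the conditional lazy-guess-your-
neighbor's-input (LGYNI) inequality
`P_A(1|10z) + P_B(1|01z) - P_{AB}(11|11z) ≥ 0`. -/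
theorem conditional_lgyni_inequality (P : Corr3)
    (hP : IsCausal (fun _ : Fin 3 => Bool) (fun _ : Fin 3 => Bool) Finset.univ P)
    (z : Bool) :
    0 ≤ (∑ b : Bool, ∑ c : Bool, P (t3 true false z) (t3 true b c))
      + (∑ a : Bool, ∑ c : Bool, P (t3 false true z) (t3 a true c))
      - (∑ c : Bool, P (t3 true true z) (t3 true true c)) := by
  obtain ⟨q, Pf, Pr, hq, hPf, hPr, hEq⟩ := causal_step hP (by decide)
  simp only [hEq]
  refine keyA _ _ _ _ ?_
  intro k _
  obtain ⟨kv, hkv⟩ := k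
  rcases fin3_cases kv with rfl | rfl | rfl
  · exact brA (hq _) (hPf _) (hPr ⟨0, hkv⟩) z
  · exact brB (hq _) (hPf _) (hPr ⟨1, hkv⟩) z
  · exact brC (hq _) (hPf _) (hPr ⟨2, hkv⟩) z
end
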